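/- arXiv:2303.01077 — 4 statements merged into one kernel-verified Lean document; each statement's English description precedes it below -/
import Mathlib

section
/- Let d ≥ 1 be an integer, let σ ≥ d+1 be a real number, let 0 < ε < 2^{−12d−9}, and let v : ℤ^d → [0,1] be arbitrary. Let (R^{βγ}) be a family of complex coefficients, indexed by pairs of multi-indices (β,γ) with |β+γ| = 6 and Δ(β+γ) ≤ 1, satisfying |R^{βγ}| ≤ 1 and R^{βγ} = conj(R^{γβ}). Let q : ℝ → (ℤ^d → ℂ) be such that each coordinate t ↦ q_j(t) is differentiable, the curve t ↦ q(t) is continuous for the norm ⫴q⫴_σ = sup_{j∈ℤ^d} |q_j|(1+⟨j⟩)^σ, and q satisfies the equations of motion √−1 · q_j′(t) = v_j q_j(t) + |q_j(t)|² q_j(t) + ∑_{β,γ} R^{βγ} γ_j q(t)^β conj(q(t))^{γ−e_j} for all t ∈ ℝ and all j ∈ ℤ^d (the sum is over the index set above; it is finite for each j). If sup_{j∈ℤ^d} |q_j(0)|(1+|j|₁)^σ ≤ ε and q_0(0) = 0 (the coordinate at the origin vanishes at time 0), then for every real t with |t| ≤ ε^{−3}·2^σ and every j ∈ ℤ^d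 one has | |q_j(t)|² − |q_j(0)|² | < ε²(1+⟨j⟩)^{−3σ}. -/
open scoped BigOperators

noncomputable section

/-- ℓ¹ norm (as a natural number) of a lattice point in `ℤ^d`. -/
def norm1 {d : ℕ} (j : Fin d → ℤ) : ℕ := ∑ i, (j i).natAbs

/-- `⟨j⟩ = max(|j|₁, 1)`. -/
def jbra {d : ℕ} (j : Fin d → ℤ) : ℕ := max (norm1 j) 1

/-- ℓ¹-diameter of a finite set of lattice points. -/
def diam1 {d : ℕ} (S : Finset (Fin d → ℤ)) : ℕ :=
  (S ×ˢ S).sup fun p => norm1 (p.1 - p.2)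

/-- Multi-indices on `ℤ^d`: finitely supported functions to `ℕ`. -/
abbrev MIdx (d : ℕ) := (Fin d → ℤ) →₀ ℕ

/-- total weight `|m| = ∑ m_j` of a multi-index. -/
def wt {d : ℕ} (m : MIdx d) : ℕ := m.sum fun _ n => n

/-- `Δ(m)`: ℓ¹-diameter of the support of a multi-index. -/
def mdiam {d : ℕ} (m : MIdx d) : ℕ := diam1 m.support

/-- the monomial `q^β * conj(q)^γ`. -/
def mono {d : ℕ} (q : (Fin d → ℤ) → ℂ) (β γ : MIdx d) : ℂ :=
  (β.prod fun a n => q a ^ n) * (γ.prod fun a n => (starRingEnd ℂ) (q a) ^ n)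

/-- Index set of short-range degree-6 monomials. -/
abbrev PairIdx (d : ℕ) :=
  {p : MIdx d × MIdx d // wt (p.1 + p.2) = 6 ∧ mdiam (p.1 + p.2) ≤ 1}


-- basic lemmas
lemma norm1_eq_zero {d : ℕ} {j : Fin d → ℤ} : norm1 j = 0 ↔ j = 0 := by
  constructor
  · intro h
    funext i
    have := Finset.sum_eq_zero_iff.mp h i (Finset.mem_univ i)
    simpa [Int.natAbs_eq_zero] using this
  · rintro rfl; simp [norm1]

lemma norm1_triangle {d : ℕ} (a b : Fin d → ℤ) : norm1 (a + b) ≤ norm1 a + norm1 b := by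
  classical
  rw [norm1, norm1, norm1, ← Finset.sum_add_distrib]
  exact Finset.sum_le_sum fun i _ => Int.natAbs_add_le _ _

lemma value_le_wt {d : ℕ} (m : MIdx d) (a : Fin d → ℤ) : m a ≤ wt m := by
  classical
  by_cases h : a ∈ m.support
  · exact Finset.single_le_sum (fun i _ => Nat.zero_le _) h
  · simp [Finsupp.notMem_support_iff.mp h]

lemma wt_add {d : ℕ} (m n : MIdx d) : wt (m + n) = wt m + wt n := by
  classical
  simp [wt, Finsupp.sum_add_index']

lemma mem_support_left {d : ℕ} {m n : MIdx d} {a : Fin d → ℤ}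
    (h : a ∈ m.support) : a ∈ (m + n).support := by
  simp only [Finsupp.mem_support_iff] at h ⊢
  simp only [Finsupp.add_apply]
  omega

lemma mem_support_right {d : ℕ} {m n : MIdx d} {a : Fin d → ℤ}
    (h : a ∈ n.support) : a ∈ (m + n).support := by
  simp only [Finsupp.mem_support_iff] at h ⊢
  simp only [Finsupp.add_apply]
  omega

lemma norm1_sub_le_mdiam {d : ℕ} {m : MIdx d} {a b : Fin d → ℤ}
    (ha : a ∈ m.support) (hb : b ∈ m.support) : norm1 (a - b) ≤ mdiam m := by
  classical
  have hmem : (a, b) ∈ m.support ×ˢ m.support := Finset.mem_product.mpr ⟨ha, hb⟩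
  exact Finset.le_sup (f := fun p : (Fin d → ℤ) × (Fin d → ℤ) => norm1 (p.1 - p.2)) hmem

lemma unit_vector {d : ℕ} {u : Fin d → ℤ} (h : norm1 u = 1) :
    ∃ i : Fin d, (u i = 1 ∨ u i = -1) ∧ ∀ l, l ≠ i → u l = 0 := by
  classical
  have hne : ∃ i ∈ Finset.univ, (u i).natAbs ≠ 0 := by
    by_contra hc
    push_neg at hc
    have : norm1 u = 0 := Finset.sum_eq_zero fun i hi => hc i hi
    omega
  obtain ⟨i, -, hi⟩ := hne
  have hsplit : (u i).natAbs + ∑ l ∈ Finset.univ.erase i, (u l).natAbs = 1 := by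
    rw [← h, norm1, Finset.add_sum_erase _ (fun l => (u l).natAbs) (Finset.mem_univ i)]
  have h1 : (u i).natAbs = 1 := by omega
  have h2 : ∑ l ∈ Finset.univ.erase i, (u l).natAbs = 0 := by omega
  refine ⟨i, ?_, ?_⟩
  · rcases Int.natAbs_eq (u i) with he | he <;> rw [he] <;> simp [h1]
  · intro l hl
    have := Finset.sum_eq_zero_iff.mp h2 l (Finset.mem_erase.mpr ⟨hl, Finset.mem_univ l⟩)
    exact Int.natAbs_eq_zero.mp this


lemma norm1_neg {d : ℕ} (u : Fin d → ℤ) : norm1 (-u) = norm1 u := by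
  unfold norm1; congr 1; funext i; simp

lemma jbra_adj {d : ℕ} {j k : Fin d → ℤ} (h : norm1 (k - j) ≤ 1) :
    jbra j ≤ 1 + jbra k := by
  have h1 : norm1 j ≤ norm1 k + norm1 (j - k) := by
    have := norm1_triangle k (j - k)
    simpa using this
  have h2 : norm1 (j - k) = norm1 (k - j) := by
    rw [← norm1_neg (j - k)]; congr 1; abel
  unfold jbra; omega

lemma one_le_jbra {d : ℕ} (j : Fin d → ℤ) : 1 ≤ jbra j := le_max_right _ _

-- the core polynomial inequality
lemma core_poly {x y : ℝ} (hx : 2 ≤ x) (hy : 2 ≤ y) (hxy : x ≤ 1 + y)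
    {a b : ℕ} (ha : 1 ≤ a) (hab : a + b = 6) :
    2 * x ^ 3 ≤ x ^ a * y ^ b := by
  have hx0 : (0:ℝ) < x := by linarith
  have hy0 : (0:ℝ) < y := by linarith
  have hyx : x ≤ y ^ 2 := by nlinarith
  have h4 : x ^ 2 ≤ y ^ 4 := by nlinarith [sq_nonneg (y^2 - x)]
  have ha6 : a ≤ 6 := by omega
  have hy1 : (1:ℝ) ≤ y := by linarith
  interval_cases a
  · have hb : b = 5 := by omega
    subst hb
    have h5 : x ^ 2 * 2 ≤ y ^ 4 * y := mul_le_mul h4 hy (by norm_num) (by positivity)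
    calc 2 * x ^ 3 = x * (x ^ 2 * 2) := by ring
      _ ≤ x * (y ^ 4 * y) := by
          exact mul_le_mul_of_nonneg_left h5 hx0.le
      _ = x ^ 1 * y ^ 5 := by ring
  · have hb : b = 4 := by omega
    subst hb
    have h2x : 2 * x ≤ x ^ 2 := by nlinarith
    calc 2 * x ^ 3 = (2 * x) * x ^ 2 := by ring
      _ ≤ x ^ 2 * x ^ 2 := mul_le_mul_of_nonneg_right h2x (by positivity)
      _ ≤ x ^ 2 * y ^ 4 := mul_le_mul_of_nonneg_left h4 (by positivity)
  · have hb : b = 3 := by omega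
    subst hb
    have h2y : (2:ℝ) ≤ y ^ 3 := by nlinarith
    calc 2 * x ^ 3 = x ^ 3 * 2 := by ring
      _ ≤ x ^ 3 * y ^ 3 := mul_le_mul_of_nonneg_left h2y (by positivity)
  · have hb : b = 2 := by omega
    subst hb
    have h1 : 2 * x ^ 3 ≤ x ^ 4 := by nlinarith [pow_pos hx0 3]
    have h2 : (1:ℝ) ≤ y ^ 2 := by nlinarith
    calc 2 * x ^ 3 ≤ x ^ 4 := h1
      _ = x ^ 4 * 1 := by ring
      _ ≤ x ^ 4 * y ^ 2 := mul_le_mul_of_nonneg_left h2 (by positivity)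
  · have hb : b = 1 := by omega
    subst hb
    have h1 : 2 * x ^ 3 ≤ x ^ 5 := by
      have h2 : (2:ℝ) ≤ x ^ 2 := by nlinarith
      calc 2 * x ^ 3 ≤ x ^ 2 * x ^ 3 := mul_le_mul_of_nonneg_right h2 (pow_pos hx0 3).le
        _ = x ^ 5 := by ring
    have h2 : (1:ℝ) ≤ y ^ 1 := by simpa using hy1
    calc 2 * x ^ 3 ≤ x ^ 5 := h1
      _ = x ^ 5 * 1 := by ring
      _ ≤ x ^ 5 * y ^ 1 := mul_le_mul_of_nonneg_left h2 (by positivity)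
  · have hb : b = 0 := by omega
    subst hb
    have h1 : 2 * x ^ 3 ≤ x ^ 6 := by
      have h2 : (2:ℝ) ≤ x ^ 3 := by nlinarith
      calc 2 * x ^ 3 ≤ x ^ 3 * x ^ 3 := mul_le_mul_of_nonneg_right h2 (pow_pos hx0 3).le
        _ = x ^ 6 := by ring
    calc 2 * x ^ 3 ≤ x ^ 6 := h1
      _ = x ^ 6 * y ^ 0 := by ring

-- rpow decay lemma
lemma decay_bound {x y σ : ℝ} (hx : 2 ≤ x) (hy : 2 ≤ y) (hxy : x ≤ 1 + y)
    (hσ : 0 ≤ σ) {a b : ℕ} (ha : 1 ≤ a) (hab : a + b = 6) :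
    (x ^ (-σ)) ^ a * (y ^ (-σ)) ^ b ≤ (2:ℝ) ^ (-σ) * x ^ (-(3 * σ)) := by
  have hx0 : (0:ℝ) < x := by linarith
  have hy0 : (0:ℝ) < y := by linarith
  have key : ((2:ℝ) * x ^ 3) ^ σ ≤ (x ^ a * y ^ b) ^ σ :=
    Real.rpow_le_rpow (by positivity) (core_poly hx hy hxy ha hab) hσ
  have e1 : ((2:ℝ) * x ^ 3) ^ σ = (2:ℝ) ^ σ * x ^ (3 * σ) := by
    rw [Real.mul_rpow (by norm_num) (by positivity), ← Real.rpow_natCast x 3,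
      ← Real.rpow_mul hx0.le]
    norm_num
  have e2 : (x ^ a * y ^ b) ^ σ = x ^ ((a:ℝ) * σ) * y ^ ((b:ℝ) * σ) := by
    rw [Real.mul_rpow (by positivity) (by positivity), ← Real.rpow_natCast x a,
      ← Real.rpow_natCast y b, ← Real.rpow_mul hx0.le, ← Real.rpow_mul hy0.le]
  have e3 : (x ^ (-σ)) ^ a = (x ^ ((a:ℝ) * σ))⁻¹ := by
    rw [← Real.rpow_natCast (x ^ (-σ)) a, ← Real.rpow_mul hx0.le, ← Real.rpow_neg hx0.le]
    ring_nf
  have e4 : (y ^ (-σ)) ^ b = (y ^ ((b:ℝ) * σ))⁻¹ := by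
    rw [← Real.rpow_natCast (y ^ (-σ)) b, ← Real.rpow_mul hy0.le, ← Real.rpow_neg hy0.le]
    ring_nf
  rw [e3, e4, Real.rpow_neg (by norm_num : (0:ℝ) ≤ 2), Real.rpow_neg hx0.le,
    ← mul_inv, ← mul_inv]
  apply inv_anti₀ (by positivity)
  calc (2:ℝ) ^ σ * x ^ (3 * σ) = ((2:ℝ) * x ^ 3) ^ σ := e1.symm
    _ ≤ (x ^ a * y ^ b) ^ σ := key
    _ = x ^ ((a:ℝ) * σ) * y ^ ((b:ℝ) * σ) := e2


lemma norm1_signed_unit {d : ℕ} {i : Fin d} {s : ℤ} (hs : s = 1 ∨ s = -1) :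
    norm1 (fun l => if l = i then s else 0) = 1 := by
  classical
  unfold norm1
  rw [Finset.sum_eq_single i]
  · rcases hs with rfl | rfl <;> simp
  · intro l _ hl; simp [hl]
  · intro h; exact absurd (Finset.mem_univ i) h

lemma norm1_two_units {d : ℕ} {i i' : Fin d} {s s' : ℤ}
    (hs : s = 1 ∨ s = -1) (hs' : s' = 1 ∨ s' = -1)
    (hne : ¬(i = i' ∧ s = s')) :
    2 ≤ norm1 ((fun l => if l = i then s else 0) - fun l => if l = i' then s' else 0) := by
  classical
  unfold norm1
  by_cases hii : i = i'
  · subst hii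
    have hss : s ≠ s' := fun h => hne ⟨rfl, h⟩
    have : ((fun l => if l = i then s else 0) - fun l => if l = i then s' else 0) i = s - s' := by
      simp
    calc (2:ℕ) = (s - s').natAbs := by rcases hs with rfl | rfl <;> rcases hs' with rfl | rfl <;> simp_all
      _ = _ := by rw [← this]
      _ ≤ _ := Finset.single_le_sum (fun l _ => Nat.zero_le _) (Finset.mem_univ i)
  · have h1 : (((fun l => if l = i then s else 0) - fun l => if l = i' then s' else 0) i).natAbs = 1 := by
      simp [hii]; rcases hs with rfl | rfl <;> simp
    have h2 : (((fun l => if l = i then s else 0) - fun l => if l = i' then s' else 0) i').natAbs = 1 := by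
      have : i' ≠ i := fun h => hii h.symm
      simp [this]; rcases hs' with rfl | rfl <;> simp
    have hsub : ({i, i'} : Finset (Fin d)) ⊆ Finset.univ := Finset.subset_univ _
    calc (2:ℕ) = ∑ l ∈ ({i, i'} : Finset (Fin d)),
          (((fun l => if l = i then s else 0) - fun l => if l = i' then s' else 0) l).natAbs := by
          rw [Finset.sum_pair hii, h1, h2]
      _ ≤ _ := Finset.sum_le_sum_of_subset hsub

/-- structure of short-range supports containing `j` -/
lemma support_structure {d : ℕ} (hd : 1 ≤ d) (j : Fin d → ℤ) {m : MIdx d}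
    (hdm : mdiam m ≤ 1) (hj : j ∈ m.support) :
    ∃ k, norm1 (k - j) = 1 ∧ (m.support : Set (Fin d → ℤ)) ⊆ {j, k} := by
  classical
  by_cases hall : ∀ a ∈ m.support, a = j
  · refine ⟨j + fun l => if l = (⟨0, hd⟩ : Fin d) then 1 else 0, ?_, ?_⟩
    · have : (j + fun l => if l = (⟨0, hd⟩ : Fin d) then 1 else 0) - j
          = fun l => if l = (⟨0, hd⟩ : Fin d) then 1 else 0 := by funext l; simp
      rw [this]; exact norm1_signed_unit (Or.inl rfl)
    · intro a ha; left; exact hall a ha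
  · push_neg at hall
    obtain ⟨k, hk, hkj⟩ := hall
    have hk1 : norm1 (k - j) = 1 := by
      have hle : norm1 (k - j) ≤ 1 := le_trans (norm1_sub_le_mdiam hk hj) hdm
      have hne : norm1 (k - j) ≠ 0 := by
        intro h0
        exact hkj (by have := norm1_eq_zero.mp h0; funext l
                      have := congr_fun this l; simp at this; omega)
      omega
    refine ⟨k, hk1, ?_⟩
    intro a ha
    by_cases haj : a = j
    · left; exact haj
    · right
      have ha1 : norm1 (a - j) = 1 := by
        have hle : norm1 (a - j) ≤ 1 := le_trans (norm1_sub_le_mdiam ha hj) hdm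
        have hne : norm1 (a - j) ≠ 0 := by
          intro h0
          exact haj (by have := norm1_eq_zero.mp h0; funext l
                        have := congr_fun this l; simp at this; omega)
        omega
      obtain ⟨i, hsi, hzi⟩ := unit_vector ha1
      obtain ⟨i', hsi', hzi'⟩ := unit_vector hk1
      have hrep : a - j = fun l => if l = i then (a - j) i else 0 := by
        funext l
        by_cases hl : l = i
        · subst hl; simp
        · simp [hl, hzi l hl]
      have hrep' : k - j = fun l => if l = i' then (k - j) i' else 0 := by
        funext l
        by_cases hl : l = i'
        · subst hl; simp
        · simp [hl, hzi' l hl]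
      by_contra hak
      have hne2 : ¬(i = i' ∧ (a - j) i = (k - j) i') := by
        rintro ⟨rfl, heq⟩
        apply hak
        have : a - j = k - j := by rw [hrep, hrep', heq]
        have := congr_arg (· + j) this
        simpa using this
      have h2 := norm1_two_units hsi hsi' hne2
      have ha' : a ∈ m.support := ha
      have hd2 : norm1 (a - k) ≤ 1 := le_trans (norm1_sub_le_mdiam ha' hk) hdm
      have heq : a - j - (k - j) = a - k := by abel
      have hd3 : norm1 ((a - j) - (k - j)) ≤ 1 := by rw [heq]; exact hd2
      rw [hrep, hrep'] at hd3
      omega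


/-- any point of the support of `β+γ` is within distance 1 of `j` when `γ j ≠ 0` -/
lemma support_near {d : ℕ} {β γ : MIdx d} {j : Fin d → ℤ}
    (hdm : mdiam (β + γ) ≤ 1) (hj : γ j ≠ 0) {a : Fin d → ℤ}
    (ha : a ∈ (β + γ).support) : norm1 (a - j) ≤ 1 := by
  have hjs : j ∈ (β + γ).support := mem_support_right (Finsupp.mem_support_iff.mpr hj)
  exact le_trans (norm1_sub_le_mdiam ha hjs) hdm

/-- finiteness of the set of index pairs with `γ j ≠ 0` -/
lemma finite_Sset {d : ℕ} (j : Fin d → ℤ) :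
    {p : PairIdx d | p.1.2 j ≠ 0}.Finite := by
  classical
  rw [← Set.finite_coe_iff]
  set box : Finset (Fin d → ℤ) := Fintype.piFinset (fun i => Finset.Icc (j i - 1) (j i + 1))
    with hbox
  have hmem : ∀ {a : Fin d → ℤ}, norm1 (a - j) ≤ 1 → a ∈ box := by
    intro a h
    rw [hbox, Fintype.mem_piFinset]
    intro i
    have h1 : ((a - j) i).natAbs ≤ 1 :=
      le_trans (Finset.single_le_sum (f := fun l => ((a - j) l).natAbs)
        (fun l _ => Nat.zero_le _) (Finset.mem_univ i)) h
    have : (a i - j i).natAbs ≤ 1 := by simpa using h1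
    rw [Finset.mem_Icc]
    omega
  set Φ : {p : PairIdx d | p.1.2 j ≠ 0} → ({x // x ∈ box} → (Fin 7 × Fin 7)) :=
    fun p b => (⟨min (p.1.1.1 b.1) 6, by omega⟩, ⟨min (p.1.1.2 b.1) 6, by omega⟩) with hΦ
  have hball : ∀ (p : {p : PairIdx d | p.1.2 j ≠ 0}) {a : Fin d → ℤ},
      a ∈ (p.1.1.1 + p.1.1.2).support → a ∈ box := by
    intro p a ha
    exact hmem (support_near p.1.2.2 p.2 ha)
  have hb6 : ∀ (p : {p : PairIdx d | p.1.2 j ≠ 0}) (a : Fin d → ℤ),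
      p.1.1.1 a ≤ 6 ∧ p.1.1.2 a ≤ 6 := by
    intro p a
    have h1 : (p.1.1.1 + p.1.1.2) a ≤ 6 := by
      have hv := value_le_wt (p.1.1.1 + p.1.1.2) a
      rw [p.1.2.1] at hv
      exact hv
    simp only [Finsupp.add_apply] at h1
    omega
  have hinj : Function.Injective Φ := by
    intro p p' h
    have hval : ∀ a : Fin d → ℤ, p.1.1.1 a = p'.1.1.1 a ∧ p.1.1.2 a = p'.1.1.2 a := by
      intro a
      by_cases hab : a ∈ box
      · have := congr_fun h ⟨a, hab⟩
        rw [hΦ] at this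
        simp only [Prod.mk.injEq, Fin.mk.injEq] at this
        have h6 := hb6 p a
        have h6' := hb6 p' a
        omega
      · constructor
        · by_cases h1 : p.1.1.1 a = 0
          · by_cases h2 : p'.1.1.1 a = 0
            · rw [h1, h2]
            · exact absurd (hball p' (mem_support_left (Finsupp.mem_support_iff.mpr h2))) hab
          · exact absurd (hball p (mem_support_left (Finsupp.mem_support_iff.mpr h1))) hab
        · by_cases h1 : p.1.1.2 a = 0
          · by_cases h2 : p'.1.1.2 a = 0
            · rw [h1, h2]
            · exact absurd (hball p' (mem_support_right (Finsupp.mem_support_iff.mpr h2))) hab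
          · exact absurd (hball p (mem_support_right (Finsupp.mem_support_iff.mpr h1))) hab
    apply Subtype.ext; apply Subtype.ext
    apply Prod.ext <;> apply Finsupp.ext <;> intro a
    · exact (hval a).1
    · exact (hval a).2
  exact Finite.of_injective Φ hinj


lemma norm1_one_ne {d : ℕ} {j k : Fin d → ℤ} (h : norm1 (k - j) = 1) : k ≠ j := by
  intro hkj
  subst hkj
  rw [show k - k = 0 by abel, norm1_eq_zero.mpr rfl] at h
  omega

lemma wt_eq_pair {d : ℕ} {m : MIdx d} {j k : Fin d → ℤ} (hjk : j ≠ k)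
    (hs : (m.support : Set (Fin d → ℤ)) ⊆ {j, k}) : wt m = m j + m k := by
  classical
  have hsub : m.support ⊆ ({j, k} : Finset (Fin d → ℤ)) := by
    intro a ha
    have := hs ha
    simp only [Set.mem_insert_iff, Set.mem_singleton_iff] at this
    simp only [Finset.mem_insert, Finset.mem_singleton]
    exact this
  rw [wt, Finsupp.sum_of_support_subset m hsub (fun _ n => n) (fun _ _ => rfl)]
  exact Finset.sum_pair hjk

set_option maxRecDepth 10000 in
lemma card_Q : ((Finset.range 7 ×ˢ Finset.range 7 ×ˢ Finset.range 7 ×ˢ Finset.range 7).filter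
    (fun t : ℕ × ℕ × ℕ × ℕ => t.1 + t.2.1 + t.2.2.1 + t.2.2.2 = 6 ∧ 1 ≤ t.2.2.1)).card = 56 := by
  decide

lemma card_Sset_le {d : ℕ} (hd : 1 ≤ d) (j : Fin d → ℤ) (𝒮 : Finset (PairIdx d))
    (hS : ∀ p ∈ 𝒮, p.1.2 j ≠ 0) : 𝒮.card ≤ 112 * d := by
  classical
  set E : Finset (Fin d → ℤ) := Finset.image
    (fun z : Fin d × Bool => j + fun l => if l = z.1 then (if z.2 then (1:ℤ) else -1) else 0)
    Finset.univ with hE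
  have hEcard : E.card ≤ 2 * d := by
    calc E.card ≤ Finset.univ.card := Finset.card_image_le
      _ = 2 * d := by simp [Fintype.card_prod]; ring
  have hmemE : ∀ {k : Fin d → ℤ}, norm1 (k - j) = 1 → k ∈ E := by
    intro k hk
    obtain ⟨i, hsi, hzi⟩ := unit_vector hk
    rw [hE, Finset.mem_image]
    rcases hsi with h1 | h1
    · refine ⟨(i, true), Finset.mem_univ _, ?_⟩
      funext l
      by_cases hl : l = i
      · have h2 : k l - j l = 1 := by rw [hl]; simpa using h1
        simp only [Pi.add_apply, if_pos hl, if_true]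
        omega
      · have h0 : k l - j l = 0 := by simpa using hzi l hl
        simp only [Pi.add_apply, hl, if_false]
        omega
    · refine ⟨(i, false), Finset.mem_univ _, ?_⟩
      funext l
      by_cases hl : l = i
      · have h2 : k l - j l = -1 := by rw [hl]; simpa using h1
        simp only [Pi.add_apply, if_pos hl, Bool.false_eq_true, if_false]
        omega
      · have h0 : k l - j l = 0 := by simpa using hzi l hl
        simp only [Pi.add_apply, hl, if_false]
        omega
  set cover : (Fin d → ℤ) → Finset (PairIdx d) :=
    fun k => 𝒮.filter (fun p => ((p.1.1 + p.1.2).support : Set (Fin d → ℤ)) ⊆ {j, k})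
    with hcoverdef
  have hcover : 𝒮 ⊆ E.biUnion cover := by
    intro p hp
    have hjmem : j ∈ (p.1.1 + p.1.2).support :=
      mem_support_right (Finsupp.mem_support_iff.mpr (hS p hp))
    obtain ⟨k, hk1, hksub⟩ := support_structure hd j p.2.2 hjmem
    rw [Finset.mem_biUnion]
    exact ⟨k, hmemE hk1, Finset.mem_filter.mpr ⟨hp, hksub⟩⟩
  have hper : ∀ k ∈ E, (cover k).card ≤ 56 := by
    intro k hkE
    have hk1 : norm1 (k - j) = 1 := by
      rw [hE, Finset.mem_image] at hkE
      obtain ⟨z, -, rfl⟩ := hkE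
      have : (j + fun l => if l = z.1 then (if z.2 then (1:ℤ) else -1) else 0) - j
          = fun l => if l = z.1 then (if z.2 then (1:ℤ) else -1) else 0 := by
        funext l; simp
      rw [this]
      unfold norm1
      rw [Finset.sum_eq_single z.1]
      · cases z.2 <;> simp
      · intro l _ hl; simp [hl]
      · intro h; exact absurd (Finset.mem_univ z.1) h
    have hjk : j ≠ k := (norm1_one_ne hk1).symm
    rw [← card_Q]
    apply Finset.card_le_card_of_injOn
      (fun p => (p.1.1 j, p.1.1 k, p.1.2 j, p.1.2 k))
    · intro p hp
      simp only [hcoverdef, Finset.mem_coe, Finset.mem_filter] at hp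
      obtain ⟨hpS, hsub⟩ := hp
      have hwt := wt_eq_pair hjk hsub
      rw [p.2.1] at hwt
      simp only [Finsupp.add_apply] at hwt
      have hγ : 1 ≤ p.1.2 j := Nat.one_le_iff_ne_zero.mpr (hS p hpS)
      simp only [Finset.mem_coe, Finset.mem_filter, Finset.mem_product, Finset.mem_range]
      refine ⟨⟨by omega, by omega, by omega, by omega⟩, by omega, hγ⟩
    · intro p hp p' hp' heq
      simp only [Finset.mem_coe, hcoverdef, Finset.mem_filter] at hp hp'
      simp only [Prod.mk.injEq] at heq
      obtain ⟨h1, h2, h3, h4⟩ := heq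
      have hzero : ∀ (pp : PairIdx d), ((pp.1.1 + pp.1.2).support : Set (Fin d → ℤ)) ⊆ {j, k} →
          ∀ a, a ≠ j → a ≠ k → pp.1.1 a = 0 ∧ pp.1.2 a = 0 := by
        intro pp hsub a haj hak
        constructor
        · by_contra h0
          have := hsub (mem_support_left (Finsupp.mem_support_iff.mpr h0))
          simp only [Set.mem_insert_iff, Set.mem_singleton_iff] at this
          tauto
        · by_contra h0
          have := hsub (mem_support_right (Finsupp.mem_support_iff.mpr h0))
          simp only [Set.mem_insert_iff, Set.mem_singleton_iff] at this
          tauto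
      apply Subtype.ext
      apply Prod.ext <;> apply Finsupp.ext <;> intro a
      · by_cases haj : a = j
        · subst haj; exact h1
        · by_cases hak : a = k
          · subst hak; exact h2
          · rw [(hzero p hp.2 a haj hak).1, (hzero p' hp'.2 a haj hak).1]
      · by_cases haj : a = j
        · subst haj; exact h3
        · by_cases hak : a = k
          · subst hak; exact h4
          · rw [(hzero p hp.2 a haj hak).2, (hzero p' hp'.2 a haj hak).2]
  calc 𝒮.card ≤ (E.biUnion cover).card := Finset.card_le_card hcover
    _ ≤ ∑ k ∈ E, (cover k).card := Finset.card_biUnion_le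
    _ ≤ ∑ _k ∈ E, 56 := Finset.sum_le_sum hper
    _ = E.card * 56 := by rw [Finset.sum_const, smul_eq_mul]
    _ ≤ 2 * d * 56 := by exact Nat.mul_le_mul_right _ hEcard
    _ = 112 * d := by ring


set_option maxHeartbeats 2000000 in
lemma term_bound {d : ℕ} (hd : 1 ≤ d) {σ ε : ℝ} (hσ0 : 0 ≤ σ) (hε0 : 0 < ε)
    (u : (Fin d → ℤ) → ℂ)
    (hu : ∀ a, ‖u a‖ ≤ 2 * ε * (1 + (jbra a : ℝ)) ^ (-σ))
    (j : Fin d → ℤ) (p : PairIdx d) (hγ : p.1.2 j ≠ 0) :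
    ‖u j‖ * ‖mono u p.1.1 (p.1.2 - Finsupp.single j 1)‖
      ≤ (2 * ε) ^ 6 * ((2:ℝ) ^ (-σ) * (1 + (jbra j : ℝ)) ^ (-(3 * σ))) := by
  classical
  obtain ⟨⟨β, γ⟩, hwt6, hdm⟩ := p
  simp only at hγ ⊢
  set δ : MIdx d := γ - Finsupp.single j 1 with hδ
  have hle : Finsupp.single j 1 ≤ γ := by
    rw [Finsupp.single_le_iff]
    omega
  have hγeq : δ + Finsupp.single j 1 = γ := tsub_add_cancel_of_le hle
  -- the second support point
  have hjmem : j ∈ (β + γ).support :=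
    mem_support_right (Finsupp.mem_support_iff.mpr hγ)
  obtain ⟨k, hk1, hksub⟩ := support_structure hd j hdm hjmem
  have hkj : k ≠ j := norm1_one_ne hk1
  -- real weights
  set x : ℝ := 1 + (jbra j : ℝ) with hx
  set y : ℝ := 1 + (jbra k : ℝ) with hy
  have hx2 : 2 ≤ x := by
    have := one_le_jbra j
    rw [hx]
    have : (1:ℝ) ≤ (jbra j : ℝ) := by exact_mod_cast one_le_jbra j
    linarith
  have hy2 : 2 ≤ y := by
    have : (1:ℝ) ≤ (jbra k : ℝ) := by exact_mod_cast one_le_jbra k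
    rw [hy]; linarith
  have hxy : x ≤ 1 + y := by
    have := jbra_adj (le_of_eq hk1)
    rw [hx, hy]
    push_cast
    have : (jbra j : ℝ) ≤ 1 + (jbra k : ℝ) := by exact_mod_cast this
    linarith
  set w : (Fin d → ℤ) → ℝ := fun a => 2 * ε * (1 + (jbra a : ℝ)) ^ (-σ) with hw
  have hw0 : ∀ a, 0 ≤ w a := by
    intro a
    apply mul_nonneg (by linarith) (Real.rpow_nonneg (by positivity) _)
  have habs0 : ∀ a, (0:ℝ) ≤ ‖u a‖ := fun a => norm_nonneg _
  -- support facts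
  have hsuppβ : ∀ a, β a ≠ 0 → a = j ∨ a = k := by
    intro a h0
    have := hksub (mem_support_left (Finsupp.mem_support_iff.mpr h0))
    simpa using this
  have hsuppδ : ∀ a, δ a ≠ 0 → a = j ∨ a = k := by
    intro a h0
    have hγa : γ a ≠ 0 := by
      rw [hδ] at h0
      rw [Finsupp.tsub_apply] at h0
      omega
    have := hksub (mem_support_right (Finsupp.mem_support_iff.mpr hγa))
    simpa using this
  -- bound each Finsupp.prod by an explicit pair product
  have hprod : ∀ m : MIdx d, (∀ a, m a ≠ 0 → a = j ∨ a = k) →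
      ∀ v : (Fin d → ℤ) → ℂ, (∀ a, ‖v a‖ = ‖u a‖) →
      ‖m.prod fun a n => v a ^ n‖ ≤ w j ^ m j * w k ^ m k := by
    intro m hm v hv
    have h1 : ‖m.prod fun a n => v a ^ n‖
        = m.prod fun a n => ‖v a‖ ^ n := by
      rw [Finsupp.prod, norm_prod, Finsupp.prod]
      exact Finset.prod_congr rfl fun a _ => norm_pow _ _
    rw [h1]
    have hsub : m.support ⊆ ({j, k} : Finset (Fin d → ℤ)) := by
      intro a ha
      have := hm a (Finsupp.mem_support_iff.mp ha)
      simpa [Finset.mem_insert, Finset.mem_singleton] using this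
    rw [Finsupp.prod_of_support_subset m hsub _ (fun a _ => pow_zero _)]
    rw [Finset.prod_pair hkj.symm]
    have hb : ∀ a, ‖v a‖ ^ (m a) ≤ w a ^ (m a) := by
      intro a
      apply pow_le_pow_left₀ (by rw [hv a]; exact habs0 a)
      rw [hv a]; exact hu a
    exact mul_le_mul (hb j) (hb k) (pow_nonneg (by rw [hv k]; exact habs0 k) _)
      (pow_nonneg (hw0 j) _)
  -- combine
  have hβbd := hprod β (by intro a h; exact hsuppβ a h) u (fun a => rfl)
  have hδbd := hprod δ (by intro a h; exact hsuppδ a h)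
      (fun a => (starRingEnd ℂ) (u a)) (fun a => Complex.norm_conj (u a))
  have humono : ‖u j‖ * ‖mono u β δ‖
      ≤ w j ^ (1 + β j + δ j) * w k ^ (β k + δ k) := by
    rw [mono, norm_mul]
    calc ‖u j‖ * (‖β.prod fun a n => u a ^ n‖ *
          ‖δ.prod fun a n => (starRingEnd ℂ) (u a) ^ n‖)
        ≤ w j * ((w j ^ β j * w k ^ β k) * (w j ^ δ j * w k ^ δ k)) := by
          apply mul_le_mul (hu j)
          · apply mul_le_mul hβbd hδbd (norm_nonneg _)
            have := hw0 j; have := hw0 k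
            positivity
          · exact mul_nonneg (norm_nonneg _) (norm_nonneg _)
          · exact hw0 j
      _ = w j ^ (1 + β j + δ j) * w k ^ (β k + δ k) := by
          rw [pow_add, pow_add, pow_add, pow_one]
          ring
  -- weight arithmetic
  have hwtpair : (β + γ) j + (β + γ) k = 6 := by
    rw [← wt_eq_pair hkj.symm hksub, hwt6]
  have hγj : γ j = δ j + 1 := by
    have h0 : δ j = γ j - (Finsupp.single j 1) j := Finsupp.tsub_apply γ (Finsupp.single j 1) j
    rw [Finsupp.single_apply, if_pos rfl] at h0
    omega
  have hγk : γ k = δ k := by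
    have h0 : δ k = γ k - (Finsupp.single j 1) k := Finsupp.tsub_apply γ (Finsupp.single j 1) k
    rw [Finsupp.single_apply, if_neg (fun h => hkj h.symm)] at h0
    omega
  have hA : (1 + β j + δ j) + (β k + δ k) = 6 := by
    simp only [Finsupp.add_apply] at hwtpair
    omega
  -- final decay estimate
  have hsplit : w j ^ (1 + β j + δ j) * w k ^ (β k + δ k)
      = (2 * ε) ^ 6 * ((x ^ (-σ)) ^ (1 + β j + δ j) * (y ^ (-σ)) ^ (β k + δ k)) := by
    rw [hw]
    simp only
    rw [mul_pow, mul_pow, ← hx, ← hy]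
    rw [show (2 * ε) ^ 6 = (2*ε) ^ ((1 + β j + δ j) + (β k + δ k)) by rw [hA]]
    rw [pow_add]
    ring
  calc ‖u j‖ * ‖mono u β δ‖
      ≤ w j ^ (1 + β j + δ j) * w k ^ (β k + δ k) := humono
    _ = (2 * ε) ^ 6 * ((x ^ (-σ)) ^ (1 + β j + δ j) * (y ^ (-σ)) ^ (β k + δ k)) := hsplit
    _ ≤ (2 * ε) ^ 6 * ((2:ℝ) ^ (-σ) * x ^ (-(3 * σ))) := by
        apply mul_le_mul_of_nonneg_left
          (decay_bound hx2 hy2 hxy hσ0 (by omega) hA) (by positivity)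


lemma Fsum_bound {d : ℕ} (hd : 1 ≤ d) {σ ε : ℝ} (hσ0 : 0 ≤ σ) (hε0 : 0 < ε)
    (R : MIdx d → MIdx d → ℂ)
    (hRbd : ∀ β γ : MIdx d, wt (β + γ) = 6 → mdiam (β + γ) ≤ 1 → ‖R β γ‖ ≤ 1)
    (u : (Fin d → ℤ) → ℂ)
    (hu : ∀ a, ‖u a‖ ≤ 2 * ε * (1 + (jbra a : ℝ)) ^ (-σ))
    (j : Fin d → ℤ) :
    ‖u j‖ * ‖∑' p : PairIdx d,
        R p.1.1 p.1.2 * (p.1.2 j : ℂ) * mono u p.1.1 (p.1.2 - Finsupp.single j 1)‖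
      ≤ 672 * d * ((2 * ε) ^ 6 * ((2:ℝ) ^ (-σ) * (1 + (jbra j : ℝ)) ^ (-(3 * σ)))) := by
  classical
  set S : Finset (PairIdx d) := (finite_Sset j).toFinset with hSdef
  set g : PairIdx d → ℂ := fun p =>
    R p.1.1 p.1.2 * (p.1.2 j : ℂ) * mono u p.1.1 (p.1.2 - Finsupp.single j 1) with hg
  have hSmem : ∀ p ∈ S, p.1.2 j ≠ 0 := by
    intro p hp
    rw [hSdef, Set.Finite.mem_toFinset] at hp
    exact hp
  have hzero : ∀ p ∉ S, g p = 0 := by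
    intro p hp
    rw [hSdef, Set.Finite.mem_toFinset] at hp
    simp only [Set.mem_setOf_eq, not_not] at hp
    rw [hg]
    simp only [hp, Nat.cast_zero, mul_zero, zero_mul]
  set C : ℝ := (2 * ε) ^ 6 * ((2:ℝ) ^ (-σ) * (1 + (jbra j : ℝ)) ^ (-(3 * σ))) with hC
  have hC0 : 0 ≤ C := by
    rw [hC]
    have h1 : (0:ℝ) < 1 + (jbra j : ℝ) := by positivity
    positivity
  have hterm : ∀ p ∈ S, ‖u j‖ * ‖g p‖ ≤ 6 * C := by
    intro p hp
    have hγ := hSmem p hp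
    have habs : ‖g p‖ = ‖R p.1.1 p.1.2‖ * (p.1.2 j : ℝ) *
        ‖mono u p.1.1 (p.1.2 - Finsupp.single j 1)‖ := by
      rw [hg]
      simp only [norm_mul, Complex.norm_natCast]
    have hγ6 : (p.1.2 j : ℝ) ≤ 6 := by
      have h1 : p.1.2 j ≤ (p.1.1 + p.1.2) j := by
        simp only [Finsupp.add_apply]; omega
      have h2 := value_le_wt (p.1.1 + p.1.2) j
      rw [p.2.1] at h2
      exact_mod_cast le_trans h1 h2
    have hR1 := hRbd p.1.1 p.1.2 p.2.1 p.2.2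
    have hmono := term_bound hd hσ0 hε0 u hu j p hγ
    rw [habs]
    calc ‖u j‖ * (‖R p.1.1 p.1.2‖ * (p.1.2 j : ℝ) *
          ‖mono u p.1.1 (p.1.2 - Finsupp.single j 1)‖)
        = ‖R p.1.1 p.1.2‖ * (p.1.2 j : ℝ) *
          (‖u j‖ * ‖mono u p.1.1 (p.1.2 - Finsupp.single j 1)‖) := by
          ring
      _ ≤ 1 * 6 * C := by
          apply mul_le_mul
          · exact mul_le_mul hR1 hγ6 (by positivity) (by norm_num)
          · exact hmono
          · positivity
          · norm_num
      _ = 6 * C := by ring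
  calc ‖u j‖ * ‖∑' p : PairIdx d, g p‖
      = ‖u j‖ * ‖∑ p ∈ S, g p‖ := by rw [tsum_eq_sum hzero]
    _ ≤ ‖u j‖ * ∑ p ∈ S, ‖g p‖ := by
        apply mul_le_mul_of_nonneg_left (norm_sum_le _ _) (norm_nonneg _)
    _ = ∑ p ∈ S, ‖u j‖ * ‖g p‖ := Finset.mul_sum _ _ _
    _ ≤ ∑ _p ∈ S, 6 * C := Finset.sum_le_sum hterm
    _ = (S.card : ℝ) * (6 * C) := by rw [Finset.sum_const, nsmul_eq_mul]
    _ ≤ (112 * d : ℕ) * (6 * C) := by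
        apply mul_le_mul_of_nonneg_right _ (by positivity)
        exact_mod_cast card_Sset_le hd j S hSmem
    _ = 672 * d * C := by push_cast; ring

-- derivative identity
lemma re_deriv_identity (vv x : ℝ) (z F : ℂ) :
    ((-Complex.I * ((vv:ℂ) * z + (x:ℂ) * z + F)) * (starRingEnd ℂ) z
      + z * (starRingEnd ℂ) (-Complex.I * ((vv:ℂ) * z + (x:ℂ) * z + F))).re
    = 2 * (F * (starRingEnd ℂ) z).im := by
  simp only [map_mul, map_add, map_neg, Complex.conj_I, Complex.conj_ofReal,
    Complex.mul_re, Complex.mul_im, Complex.add_re, Complex.add_im, Complex.neg_re,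
    Complex.neg_im, Complex.I_re, Complex.I_im, Complex.conj_re, Complex.conj_im,
    Complex.ofReal_re, Complex.ofReal_im]
  ring

lemma hasDeriv_abs_sq {q : ℝ → ℂ} {q' : ℂ} {t : ℝ} (h : HasDerivAt q q' t) :
    HasDerivAt (fun s => ‖q s‖ ^ 2)
      ((q' * (starRingEnd ℂ) (q t) + q t * (starRingEnd ℂ) q').re) t := by
  have hstar : HasDerivAt (fun s => (starRingEnd ℂ) (q s)) ((starRingEnd ℂ) q') t := by
    exact h.star
  have hmul := h.mul hstar
  have hre := (Complex.reCLM : ℂ →L[ℝ] ℝ).hasFDerivAt.comp_hasDerivAt t hmul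
  have hre2 : HasDerivAt (fun s => (q s * (starRingEnd ℂ) (q s)).re)
      ((q' * (starRingEnd ℂ) (q t) + q t * (starRingEnd ℂ) q').re) t := hre
  have heq : (fun s => (q s * (starRingEnd ℂ) (q s)).re)
      = fun s => ‖q s‖ ^ 2 := by
    funext s
    rw [Complex.mul_conj, Complex.ofReal_re, ← Complex.sq_norm]
  rw [heq] at hre2
  exact hre2

-- numeric lemma
lemma numeric_nat : ∀ d : ℕ, 1 ≤ d → 1376256 * d ≤ 2 ^ (12 * d + 9) := by
  intro d hd
  induction d with
  | zero => omega
  | succ n ih =>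
    by_cases hn : 1 ≤ n
    · have h1 := ih hn
      have h2 : (1376256:ℕ) ≤ 2 ^ (12 * n + 9) := by
        calc (1376256:ℕ) ≤ 1376256 * n := by nlinarith
          _ ≤ 2 ^ (12 * n + 9) := h1
      calc 1376256 * (n + 1) = 1376256 * n + 1376256 := by ring
        _ ≤ 2 ^ (12 * n + 9) + 2 ^ (12 * n + 9) := by omega
        _ = 2 ^ (12 * n + 10) := by ring
        _ ≤ 2 ^ (12 * (n+1) + 9) := Nat.pow_le_pow_right (by norm_num) (by omega)
    · have : n = 0 := by omega
      subst this
      norm_num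


/-- Theorem 2 of the paper, polynomial form.
For any `d ≥ 1`, `σ ≥ d+1`, `0 < ε < 2^{-12d-9}`, arbitrary potential `v : ℤ^d → [0,1]`
and short-range degree-6 real coefficients `R^{βγ}` with `|R^{βγ}| ≤ 1`, any solution of the
coupled-oscillator equations of motion with `⫴q(0)⫴_σ ≤ ε` and `q_0(0) = 0` satisfies
`| |q_j(t)|² − |q_j(0)|² | < ε² (1+⟨j⟩)^{-3σ}` for all `|t| ≤ ε^{-3} 2^σ`. -/
theorem stability_short_range_oscillators
    (d : ℕ) (hd : 1 ≤ d) (σ ε : ℝ) (hσ : (d : ℝ) + 1 ≤ σ)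
    (hε0 : 0 < ε) (hε1 : ε < (2 : ℝ) ^ (-(12 * (d : ℤ)) - 9))
    (v : (Fin d → ℤ) → ℝ) (hv : ∀ j, v j ∈ Set.Icc (0 : ℝ) 1)
    (R : MIdx d → MIdx d → ℂ)
    (hRbd : ∀ β γ : MIdx d, wt (β + γ) = 6 → mdiam (β + γ) ≤ 1 →
      ‖R β γ‖ ≤ 1)
    (hRsym : ∀ β γ : MIdx d, wt (β + γ) = 6 → mdiam (β + γ) ≤ 1 →
      R β γ = (starRingEnd ℂ) (R γ β))
    (q q' : ℝ → (Fin d → ℤ) → ℂ)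
    (hderiv : ∀ (t : ℝ) (j : Fin d → ℤ), HasDerivAt (fun s => q s j) (q' t j) t)
    (hcont : ∀ t₀ : ℝ, ∀ δ > (0 : ℝ), ∃ r > (0 : ℝ), ∀ t : ℝ, |t - t₀| < r →
      ∀ j, ‖q t j - q t₀ j‖ * (1 + (jbra j : ℝ)) ^ σ ≤ δ)
    (hode : ∀ (t : ℝ) (j : Fin d → ℤ),
      Complex.I * q' t j =
        (v j : ℂ) * q t j + ((‖q t j‖ ^ 2 : ℝ) : ℂ) * q t j +
          ∑' p : PairIdx d,
            R p.1.1 p.1.2 * (p.1.2 j : ℂ) *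
              mono (q t) p.1.1 (p.1.2 - Finsupp.single j 1))
    (hinit : ∀ j, ‖q 0 j‖ * (1 + (norm1 j : ℝ)) ^ σ ≤ ε)
    (hzero : q 0 0 = 0) :
    ∀ t : ℝ, |t| ≤ ε ^ (-3 : ℤ) * (2 : ℝ) ^ σ →
      ∀ j : Fin d → ℤ,
        |‖q t j‖ ^ 2 - ‖q 0 j‖ ^ 2|
          < ε ^ 2 * (1 + (jbra j : ℝ)) ^ (-(3 * σ)) := by
  classical
  have hd1 : (1:ℝ) ≤ (d:ℝ) := by exact_mod_cast hd
  have hσ0 : (0:ℝ) ≤ σ := by linarith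
  have hx2 : ∀ k : Fin d → ℤ, (2:ℝ) ≤ 1 + (jbra k : ℝ) := by
    intro k
    have : (1:ℝ) ≤ (jbra k : ℝ) := by exact_mod_cast one_le_jbra k
    linarith
  have hx0 : ∀ k : Fin d → ℤ, (0:ℝ) < 1 + (jbra k : ℝ) :=
    fun k => lt_of_lt_of_le two_pos (hx2 k)
  have hw0 : ∀ k : Fin d → ℤ, (0:ℝ) < (1 + (jbra k : ℝ)) ^ (-σ) :=
    fun k => Real.rpow_pos_of_pos (hx0 k) _
  have hT0 : (0:ℝ) < ε ^ (-3 : ℤ) * (2:ℝ) ^ σ :=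
    mul_pos (zpow_pos hε0 _) (Real.rpow_pos_of_pos two_pos σ)
  -- initial data bound
  have hinit' : ∀ k, ‖q 0 k‖ ≤ ε * (1 + (jbra k : ℝ)) ^ (-σ) := by
    intro k
    by_cases hk : k = 0
    · subst hk
      rw [hzero, norm_zero]
      positivity
    · have h1 : 1 ≤ norm1 k := by
        rcases Nat.eq_zero_or_pos (norm1 k) with h | h
        · exact absurd (norm1_eq_zero.mp h) hk
        · exact h
      have h2 : jbra k = norm1 k := by unfold jbra; omega
      have h3 := hinit k
      have h4 : (1 + (norm1 k : ℝ)) = 1 + (jbra k : ℝ) := by rw [h2]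
      rw [h4] at h3
      have hxσ : (0:ℝ) < (1 + (jbra k : ℝ)) ^ σ := Real.rpow_pos_of_pos (hx0 k) σ
      rw [Real.rpow_neg (hx0 k).le]
      calc ‖q 0 k‖ = ‖q 0 k‖ * (1 + (jbra k : ℝ)) ^ σ
            * ((1 + (jbra k : ℝ)) ^ σ)⁻¹ := by field_simp
        _ ≤ ε * ((1 + (jbra k : ℝ)) ^ σ)⁻¹ := by
            apply mul_le_mul_of_nonneg_right h3 (inv_nonneg.mpr hxσ.le)
  have hG0 : ∀ k, ‖q 0 k‖ ≤ 2 * ε * (1 + (jbra k : ℝ)) ^ (-σ) := by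
    intro k
    calc ‖q 0 k‖ ≤ ε * (1 + (jbra k : ℝ)) ^ (-σ) := hinit' k
      _ ≤ 2 * ε * (1 + (jbra k : ℝ)) ^ (-σ) := by nlinarith [hw0 k, hε0]
  -- numeric smallness
  have hsmall : 86016 * (d:ℝ) * ε < 1 / 16 := by
    have hexp : (-(12 * (d:ℤ)) - 9) = -((12 * d + 9 : ℕ) : ℤ) := by push_cast; ring
    rw [hexp, zpow_neg, zpow_natCast] at hε1
    have hnat : (1376256:ℝ) * d ≤ 2 ^ (12 * d + 9) := by exact_mod_cast numeric_nat d hd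
    have h2N : (0:ℝ) < 2 ^ (12 * d + 9) := by positivity
    have hstep : 86016 * (d:ℝ) * ε < 86016 * d * ((2:ℝ) ^ (12 * d + 9))⁻¹ := by
      apply mul_lt_mul_of_pos_left hε1 (by positivity)
    have hstep2 : 86016 * (d:ℝ) * ((2:ℝ) ^ (12 * d + 9))⁻¹ ≤ 1 / 16 := by
      rw [← div_eq_mul_inv, div_le_div_iff₀ h2N (by norm_num)]
      nlinarith [hnat]
    linarith
  -- derivative bound
  have hderivbound : ∀ s : ℝ,
      (∀ a, ‖q s a‖ ≤ 2 * ε * (1 + (jbra a : ℝ)) ^ (-σ)) →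
      ∀ k, |(q' s k * (starRingEnd ℂ) (q s k) + q s k * (starRingEnd ℂ) (q' s k)).re|
        ≤ 86016 * d * ε ^ 6 * ((2:ℝ) ^ (-σ) * (1 + (jbra k : ℝ)) ^ (-(3 * σ))) := by
    intro s hGs k
    have hq'eq : q' s k = -Complex.I * ((v k : ℂ) * q s k +
        ((‖q s k‖ ^ 2 : ℝ) : ℂ) * q s k +
        ∑' p : PairIdx d, R p.1.1 p.1.2 * (p.1.2 k : ℂ) *
          mono (q s) p.1.1 (p.1.2 - Finsupp.single k 1)) := by
      rw [← hode s k, ← mul_assoc, neg_mul, Complex.I_mul_I, neg_neg, one_mul]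
    have hre : (q' s k * (starRingEnd ℂ) (q s k) + q s k * (starRingEnd ℂ) (q' s k)).re
        = 2 * ((∑' p : PairIdx d, R p.1.1 p.1.2 * (p.1.2 k : ℂ) *
            mono (q s) p.1.1 (p.1.2 - Finsupp.single k 1)) * (starRingEnd ℂ) (q s k)).im := by
      rw [hq'eq]
      exact re_deriv_identity (v k) (‖q s k‖ ^ 2) (q s k) _
    rw [hre]
    have him : |2 * ((∑' p : PairIdx d, R p.1.1 p.1.2 * (p.1.2 k : ℂ) *
          mono (q s) p.1.1 (p.1.2 - Finsupp.single k 1)) * (starRingEnd ℂ) (q s k)).im|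
        ≤ 2 * (‖q s k‖ * ‖∑' p : PairIdx d,
            R p.1.1 p.1.2 * (p.1.2 k : ℂ) *
            mono (q s) p.1.1 (p.1.2 - Finsupp.single k 1)‖) := by
      rw [abs_mul]
      rw [show |(2:ℝ)| = 2 by norm_num]
      apply mul_le_mul_of_nonneg_left _ (by norm_num : (0:ℝ) ≤ 2)
      calc |((∑' p : PairIdx d, R p.1.1 p.1.2 * (p.1.2 k : ℂ) *
            mono (q s) p.1.1 (p.1.2 - Finsupp.single k 1)) * (starRingEnd ℂ) (q s k)).im|
          ≤ ‖(∑' p : PairIdx d, R p.1.1 p.1.2 * (p.1.2 k : ℂ) *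
            mono (q s) p.1.1 (p.1.2 - Finsupp.single k 1)) * (starRingEnd ℂ) (q s k)‖ :=
            Complex.abs_im_le_norm _
        _ = ‖q s k‖ * ‖∑' p : PairIdx d,
            R p.1.1 p.1.2 * (p.1.2 k : ℂ) *
            mono (q s) p.1.1 (p.1.2 - Finsupp.single k 1)‖ := by
            rw [norm_mul, Complex.norm_conj, mul_comm]
    have hFb := Fsum_bound hd hσ0 hε0 R hRbd (q s) hGs k
    calc |2 * ((∑' p : PairIdx d, R p.1.1 p.1.2 * (p.1.2 k : ℂ) *
          mono (q s) p.1.1 (p.1.2 - Finsupp.single k 1)) * (starRingEnd ℂ) (q s k)).im|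
        ≤ 2 * (‖q s k‖ * ‖∑' p : PairIdx d,
            R p.1.1 p.1.2 * (p.1.2 k : ℂ) *
            mono (q s) p.1.1 (p.1.2 - Finsupp.single k 1)‖) := him
      _ ≤ 2 * (672 * d * ((2 * ε) ^ 6 *
            ((2:ℝ) ^ (-σ) * (1 + (jbra k : ℝ)) ^ (-(3 * σ))))) := by linarith
      _ = 86016 * d * ε ^ 6 * ((2:ℝ) ^ (-σ) * (1 + (jbra k : ℝ)) ^ (-(3 * σ))) := by ring
  -- drift bound
  have hdrift : ∀ t : ℝ, |t| ≤ ε ^ (-3 : ℤ) * (2:ℝ) ^ σ →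
      (∀ s : ℝ, |s| ≤ |t| → ∀ a, ‖q s a‖ ≤ 2 * ε * (1 + (jbra a : ℝ)) ^ (-σ)) →
      ∀ k, |‖q t k‖ ^ 2 - ‖q 0 k‖ ^ 2|
        ≤ 86016 * d * ε * (ε ^ 2 * (1 + (jbra k : ℝ)) ^ (-(3 * σ))) := by
    intro t ht hGs k
    have habs : ∀ s ∈ Set.uIcc 0 t, |s| ≤ |t| := by
      intro s hs
      rw [Set.mem_uIcc] at hs
      rw [abs_le]
      rcases abs_cases t with ⟨he, _⟩ | ⟨he, _⟩ <;> rcases hs with ⟨h1, h2⟩ | ⟨h1, h2⟩ <;>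
        constructor <;> linarith
    have hmvt := Convex.norm_image_sub_le_of_norm_hasDerivWithin_le
      (f := fun r => ‖q r k‖ ^ 2)
      (f' := fun s => (q' s k * (starRingEnd ℂ) (q s k) + q s k * (starRingEnd ℂ) (q' s k)).re)
      (fun s _ => (hasDeriv_abs_sq (hderiv s k)).hasDerivWithinAt)
      (C := 86016 * d * ε ^ 6 * ((2:ℝ) ^ (-σ) * (1 + (jbra k : ℝ)) ^ (-(3 * σ))))
      (fun s hs => by
        rw [Real.norm_eq_abs]
        exact hderivbound s (hGs s (habs s hs)) k)
      (convex_uIcc 0 t) Set.left_mem_uIcc Set.right_mem_uIcc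
    rw [Real.norm_eq_abs, Real.norm_eq_abs, sub_zero] at hmvt
    have hC0 : (0:ℝ) ≤ 86016 * d * ε ^ 6 * ((2:ℝ) ^ (-σ) * (1 + (jbra k : ℝ)) ^ (-(3 * σ))) := by
      have := hw0 k; have := hx0 k
      positivity
    have hTbd : 86016 * d * ε ^ 6 * ((2:ℝ) ^ (-σ) * (1 + (jbra k : ℝ)) ^ (-(3 * σ))) * |t|
        ≤ 86016 * d * ε * (ε ^ 2 * (1 + (jbra k : ℝ)) ^ (-(3 * σ))) := by
      have h1 : 86016 * d * ε ^ 6 * ((2:ℝ) ^ (-σ) * (1 + (jbra k : ℝ)) ^ (-(3 * σ))) * |t|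
          ≤ 86016 * d * ε ^ 6 * ((2:ℝ) ^ (-σ) * (1 + (jbra k : ℝ)) ^ (-(3 * σ)))
            * (ε ^ (-3 : ℤ) * (2:ℝ) ^ σ) :=
        mul_le_mul_of_nonneg_left ht hC0
      have h2 : 86016 * d * ε ^ 6 * ((2:ℝ) ^ (-σ) * (1 + (jbra k : ℝ)) ^ (-(3 * σ)))
            * (ε ^ (-3 : ℤ) * (2:ℝ) ^ σ)
          = 86016 * d * ε * (ε ^ 2 * (1 + (jbra k : ℝ)) ^ (-(3 * σ))) := by
        have hz : ε ^ (-3 : ℤ) = (ε ^ 3)⁻¹ := by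
          rw [show (-3 : ℤ) = -(3:ℕ) by norm_num, zpow_neg, zpow_natCast]
        have h2σ : (2:ℝ) ^ (-σ) * (2:ℝ) ^ σ = 1 := by
          rw [← Real.rpow_add two_pos]
          simp
        rw [hz]
        have hε3 : ε ^ 6 * (ε ^ 3)⁻¹ = ε ^ 3 := by
          field_simp [hε0.ne']
        calc 86016 * (d:ℝ) * ε ^ 6 * ((2:ℝ) ^ (-σ) * (1 + (jbra k : ℝ)) ^ (-(3 * σ)))
              * ((ε ^ 3)⁻¹ * (2:ℝ) ^ σ)
            = 86016 * d * (ε ^ 6 * (ε ^ 3)⁻¹) * ((2:ℝ) ^ (-σ) * (2:ℝ) ^ σ)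
              * (1 + (jbra k : ℝ)) ^ (-(3 * σ)) := by ring
          _ = 86016 * d * ε ^ 3 * (1 + (jbra k : ℝ)) ^ (-(3 * σ)) := by rw [h2σ, hε3]; ring
          _ = 86016 * d * ε * (ε ^ 2 * (1 + (jbra k : ℝ)) ^ (-(3 * σ))) := by ring
      calc _ ≤ _ := h1
        _ = _ := h2
    calc |‖q t k‖ ^ 2 - ‖q 0 k‖ ^ 2| ≤ _ * |t| := hmvt
      _ ≤ _ := hTbd

  -- improvement lemma
  have himprove : ∀ t : ℝ, |t| ≤ ε ^ (-3 : ℤ) * (2:ℝ) ^ σ →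
      (∀ s : ℝ, |s| ≤ |t| → ∀ a, ‖q s a‖ ≤ 2 * ε * (1 + (jbra a : ℝ)) ^ (-σ)) →
      ∀ k, ‖q t k‖ ≤ 3/2 * ε * (1 + (jbra k : ℝ)) ^ (-σ) := by
    intro t ht hGs k
    have hdk := hdrift t ht hGs k
    have hsm : 86016 * (d:ℝ) * ε * (ε ^ 2 * (1 + (jbra k : ℝ)) ^ (-(3 * σ)))
        ≤ 1/16 * (ε ^ 2 * (1 + (jbra k : ℝ)) ^ (-(3 * σ))) := by
      apply mul_le_mul_of_nonneg_right hsmall.le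
      have h3 : (0:ℝ) < (1 + (jbra k : ℝ)) ^ (-(3 * σ)) := Real.rpow_pos_of_pos (hx0 k) _
      positivity
    have hsq : ‖q t k‖ ^ 2 ≤ ‖q 0 k‖ ^ 2
        + 1/16 * (ε ^ 2 * (1 + (jbra k : ℝ)) ^ (-(3 * σ))) := by
      have := abs_sub_le_iff.mp hdk
      linarith [this.1]
    have hf0 : ‖q 0 k‖ ^ 2 ≤ (ε * (1 + (jbra k : ℝ)) ^ (-σ)) ^ 2 :=
      pow_le_pow_left₀ (norm_nonneg _) (hinit' k) 2
    have hX3 : (1 + (jbra k : ℝ)) ^ (-(3 * σ))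
        ≤ (1 + (jbra k : ℝ)) ^ (-σ) * (1 + (jbra k : ℝ)) ^ (-σ) := by
      rw [← Real.rpow_add (hx0 k)]
      apply Real.rpow_le_rpow_of_exponent_le (by linarith [hx2 k])
      linarith
    have htarget : ‖q t k‖ ^ 2 ≤ (3/2 * ε * (1 + (jbra k : ℝ)) ^ (-σ)) ^ 2 := by
      have hw := hw0 k
      nlinarith [sq_nonneg ε, sq_nonneg ((1 + (jbra k : ℝ)) ^ (-σ))]
    exact le_of_pow_le_pow_left₀ two_ne_zero (by positivity) htarget
  -- the bootstrap set
  set A : Set ℝ := {r | r ∈ Set.Icc (0:ℝ) (ε ^ (-3 : ℤ) * (2:ℝ) ^ σ) ∧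
    ∀ s : ℝ, |s| ≤ r → ∀ k, ‖q s k‖ ≤ 2 * ε * (1 + (jbra k : ℝ)) ^ (-σ)} with hA
  have hA0 : (0:ℝ) ∈ A := by
    refine ⟨⟨le_refl 0, hT0.le⟩, ?_⟩
    intro s hs k
    have h0 : s = 0 := abs_nonpos_iff.mp hs
    rw [h0]
    exact hG0 k
  have hAne : A.Nonempty := ⟨0, hA0⟩
  have hAbdd : BddAbove A := ⟨ε ^ (-3 : ℤ) * (2:ℝ) ^ σ, fun r hr => hr.1.2⟩
  have ht₀0 : 0 ≤ sSup A := le_csSup hAbdd hA0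
  have ht₀T : sSup A ≤ ε ^ (-3 : ℤ) * (2:ℝ) ^ σ := csSup_le hAne (fun r hr => hr.1.2)
  have hGlt : ∀ s : ℝ, |s| < sSup A → ∀ k,
      ‖q s k‖ ≤ 2 * ε * (1 + (jbra k : ℝ)) ^ (-σ) := by
    intro s hs
    obtain ⟨a, haA, hlt⟩ := exists_lt_of_lt_csSup hAne hs
    exact haA.2 s hlt.le
  have hGle : ∀ s : ℝ, |s| ≤ sSup A → ∀ k,
      ‖q s k‖ ≤ 2 * ε * (1 + (jbra k : ℝ)) ^ (-σ) := by
    intro s hs k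
    rcases lt_or_eq_of_le hs with h | h
    · exact hGlt s h k
    · by_cases ht0 : sSup A = 0
      · have hs0 : s = 0 := by
          rw [ht0] at h
          exact abs_eq_zero.mp h
        rw [hs0]
        exact hG0 k
      · have ht0' : 0 < sSup A := lt_of_le_of_ne ht₀0 (Ne.symm ht0)
        rcases (abs_eq ht₀0).mp h with hst | hst
        · -- s = sSup A : approach from the left
          subst hst
          have htend : Filter.Tendsto (fun r => ‖q r k‖)
              (nhdsWithin (sSup A) (Set.Iio (sSup A))) (nhds (‖q (sSup A) k‖)) :=
            (continuous_norm.continuousAt.comp (hderiv (sSup A) k).continuousAt).continuousWithinAt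
          apply le_of_tendsto htend
          filter_upwards [Ioo_mem_nhdsLT_of_mem
            (⟨ht0', le_refl (sSup A)⟩ : sSup A ∈ Set.Ioc 0 (sSup A))] with r hr
          exact hGlt r (by rw [abs_of_pos hr.1]; exact hr.2) k
        · -- s = -sSup A : approach from the right
          subst hst
          have htend : Filter.Tendsto (fun r => ‖q r k‖)
              (nhdsWithin (-sSup A) (Set.Ioi (-sSup A))) (nhds (‖q (-sSup A) k‖)) :=
            (continuous_norm.continuousAt.comp (hderiv (-sSup A) k).continuousAt).continuousWithinAt
          apply le_of_tendsto htend
          filter_upwards [Ioo_mem_nhdsGT_of_mem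
            (⟨le_refl (-sSup A), by linarith⟩ : -sSup A ∈ Set.Ico (-sSup A) 0)] with r hr
          exact hGlt r (by rw [abs_of_neg hr.2]; linarith [hr.1]) k
  have ht₀A : sSup A ∈ A := ⟨⟨ht₀0, ht₀T⟩, hGle⟩
  have ht₀T' : sSup A = ε ^ (-3 : ℤ) * (2:ℝ) ^ σ := by
    by_contra hne
    have hlt : sSup A < ε ^ (-3 : ℤ) * (2:ℝ) ^ σ := lt_of_le_of_ne ht₀T hne
    have himp1 := himprove (sSup A) (by rw [abs_of_nonneg ht₀0]; exact ht₀T)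
      (fun s hs => hGle s (by rwa [abs_of_nonneg ht₀0] at hs))
    have himp2 := himprove (-(sSup A)) (by rw [abs_neg, abs_of_nonneg ht₀0]; exact ht₀T)
      (fun s hs => hGle s (by rwa [abs_neg, abs_of_nonneg ht₀0] at hs))
    obtain ⟨r₁, hr₁0, hr₁⟩ := hcont (sSup A) (ε/2) (by positivity)
    obtain ⟨r₂, hr₂0, hr₂⟩ := hcont (-(sSup A)) (ε/2) (by positivity)
    have hrm : 0 < min r₁ r₂ := lt_min hr₁0 hr₂0
    have ht₁gt : sSup A < min (ε ^ (-3 : ℤ) * (2:ℝ) ^ σ) (sSup A + min r₁ r₂ / 2) :=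
      lt_min hlt (by linarith)
    have ht₁A : min (ε ^ (-3 : ℤ) * (2:ℝ) ^ σ) (sSup A + min r₁ r₂ / 2) ∈ A := by
      refine ⟨⟨le_trans ht₀0 ht₁gt.le, min_le_left _ _⟩, ?_⟩
      intro s hs k
      by_cases hst : |s| ≤ sSup A
      · exact hGle s hst k
      · push_neg at hst
        have hsle : |s| ≤ sSup A + min r₁ r₂ / 2 := le_trans hs (min_le_right _ _)
        have hxσ : (0:ℝ) < (1 + (jbra k : ℝ)) ^ σ := Real.rpow_pos_of_pos (hx0 k) σ
        have hdiffbound : ∀ t₂ : ℝ, ‖q s k - q t₂ k‖ * (1 + (jbra k : ℝ)) ^ σ ≤ ε/2 →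
            ‖q s k - q t₂ k‖ ≤ ε/2 * (1 + (jbra k : ℝ)) ^ (-σ) := by
          intro t₂ hc
          rw [Real.rpow_neg (hx0 k).le]
          calc ‖q s k - q t₂ k‖
              = ‖q s k - q t₂ k‖ * (1 + (jbra k : ℝ)) ^ σ
                * ((1 + (jbra k : ℝ)) ^ σ)⁻¹ := by field_simp
            _ ≤ ε/2 * ((1 + (jbra k : ℝ)) ^ σ)⁻¹ :=
                mul_le_mul_of_nonneg_right hc (inv_nonneg.mpr hxσ.le)
        rcases le_or_gt 0 s with hs0 | hs0
        · have hs' : |s - sSup A| < r₁ := by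
            rw [abs_of_nonneg hs0] at hst hsle
            rw [abs_of_nonneg (by linarith)]
            have := min_le_left r₁ r₂
            linarith
          have hdiff := hdiffbound (sSup A) (hr₁ s hs' k)
          calc ‖q s k‖ = ‖(q s k - q (sSup A) k) + q (sSup A) k‖ := by
                rw [sub_add_cancel]
            _ ≤ ‖q s k - q (sSup A) k‖ + ‖q (sSup A) k‖ :=
                norm_add_le _ _
            _ ≤ ε/2 * (1 + (jbra k : ℝ)) ^ (-σ) + 3/2 * ε * (1 + (jbra k : ℝ)) ^ (-σ) :=
                add_le_add hdiff (himp1 k)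
            _ = 2 * ε * (1 + (jbra k : ℝ)) ^ (-σ) := by ring
        · have hs' : |s - (-(sSup A))| < r₂ := by
            rw [abs_of_neg hs0] at hst hsle
            rw [sub_neg_eq_add, abs_of_nonpos (by linarith)]
            have := min_le_right r₁ r₂
            linarith
          have hdiff := hdiffbound (-(sSup A)) (hr₂ s hs' k)
          calc ‖q s k‖ = ‖(q s k - q (-(sSup A)) k) + q (-(sSup A)) k‖ := by
                rw [sub_add_cancel]
            _ ≤ ‖q s k - q (-(sSup A)) k‖ + ‖q (-(sSup A)) k‖ :=
                norm_add_le _ _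
            _ ≤ ε/2 * (1 + (jbra k : ℝ)) ^ (-σ) + 3/2 * ε * (1 + (jbra k : ℝ)) ^ (-σ) :=
                add_le_add hdiff (himp2 k)
            _ = 2 * ε * (1 + (jbra k : ℝ)) ^ (-σ) := by ring
    exact absurd (le_csSup hAbdd ht₁A) (not_le.mpr ht₁gt)
  -- conclusion
  intro t ht j
  have hGall : ∀ s : ℝ, |s| ≤ |t| → ∀ k,
      ‖q s k‖ ≤ 2 * ε * (1 + (jbra k : ℝ)) ^ (-σ) := by
    intro s hs
    apply hGle s
    rw [ht₀T']
    exact le_trans hs ht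
  have hdj := hdrift t ht hGall j
  have hpos : (0:ℝ) < ε ^ 2 * (1 + (jbra j : ℝ)) ^ (-(3 * σ)) := by
    have h3 : (0:ℝ) < (1 + (jbra j : ℝ)) ^ (-(3 * σ)) := Real.rpow_pos_of_pos (hx0 j) _
    positivity
  have hlt1 : 86016 * (d:ℝ) * ε * (ε ^ 2 * (1 + (jbra j : ℝ)) ^ (-(3 * σ)))
      < 1 * (ε ^ 2 * (1 + (jbra j : ℝ)) ^ (-(3 * σ))) := by
    apply mul_lt_mul_of_pos_right _ hpos
    linarith
  calc |‖q t j‖ ^ 2 - ‖q 0 j‖ ^ 2|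
      ≤ 86016 * d * ε * (ε ^ 2 * (1 + (jbra j : ℝ)) ^ (-(3 * σ))) := hdj
    _ < 1 * (ε ^ 2 * (1 + (jbra j : ℝ)) ^ (-(3 * σ))) := hlt1
    _ = ε ^ 2 * (1 + (jbra j : ℝ)) ^ (-(3 * σ)) := one_mul _
end
end

section
/- Let d ≥ 1 be an integer, let 0 < ε < 2^{−12d−9}, let σ ≥ ε^{−1} be a real number (note this forces σ ≥ d+1), and let v : ℤ^d → [0,1] be arbitrary. Let (R^{βγ}) be a family of complex coefficients, indexed by pairs of multi-indices (β,γ) with |β+γ| = 6 and Δ(β+γ) ≤ 1, satisfying |R^{βγ}| ≤ 1 and R^{βγ} = conj(R^{γβ}). Let q : ℝ → (ℤ^d → ℂ) be such that each coordinate t ↦ q_j(t) is differentiable, the curve t ↦ q(t) is continuous for the norm ⫴q⫴_σ = sup_{j∈ℤ^d} |q_j|(1+⟨j⟩)^σ, and q satisfies the equations of motion √−1 · q_j′(t) = v_j q_j(t) + |q_j(t)|² q_j(t) + ∑_{β,γ} R^{βγ} γ_j q(t)^β conj(q(t))^{γ−e_j} for all t ∈ ℝ and all j ∈ ℤ^d.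 If sup_{j∈ℤ^d} |q_j(0)|(1+|j|₁)^σ ≤ ε and q_0(0) = 0, then the stability time is exponentially long: for every real t with |t| < ε^{−3}·2^{ε^{−1}} and every j ∈ ℤ^d one has | |q_j(t)|² − |q_j(0)|² | < ε²(1+⟨j⟩)^{−3σ}. -/
open scoped BigOperators

noncomputable section

namespace SRO

variable {d : ℕ}

lemma norm1_eq_zero {j : Fin d → ℤ} : norm1 j = 0 ↔ j = 0 := by
  constructor
  · intro h
    funext i
    have := Finset.sum_eq_zero_iff.mp h i (Finset.mem_univ i)
    simpa [Int.natAbs_eq_zero] using this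
  · intro h; subst h; simp [norm1]

lemma one_le_jbra (j : Fin d → ℤ) : 1 ≤ jbra j := le_max_right _ _

lemma norm1_neg (j : Fin d → ℤ) : norm1 (-j) = norm1 j := by
  simp [norm1]

lemma norm1_triangle (a b : Fin d → ℤ) : norm1 (a + b) ≤ norm1 a + norm1 b := by
  classical
  rw [norm1, norm1, norm1, ← Finset.sum_add_distrib]
  exact Finset.sum_le_sum fun i _ => Int.natAbs_add_le _ _

lemma jbra_le_near {j k : Fin d → ℤ} (h : norm1 (j - k) ≤ 1) : jbra j ≤ jbra k + 1 := by
  have h1 : norm1 j ≤ norm1 k + 1 := by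
    have := norm1_triangle k (j - k)
    simpa [add_comm] using le_trans (by simpa using this) (by omega)
  simp only [jbra]
  omega

/-- unit vectors -/
def unitv (d : ℕ) (i : Fin d) (b : Bool) : Fin d → ℤ :=
  fun i' => if i' = i then (if b then 1 else -1) else 0

lemma eq_zero_or_unitv {v : Fin d → ℤ} (h : norm1 v ≤ 1) :
    v = 0 ∨ ∃ i b, v = unitv d i b := by
  classical
  by_cases h0 : v = 0
  · exact Or.inl h0
  · right
    have : ∃ i, v i ≠ 0 := by
      by_contra hc
      push_neg at hc
      exact h0 (funext fun i => hc i)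
    obtain ⟨i, hi⟩ := this
    have hge : 1 ≤ (v i).natAbs := by
      have := Int.natAbs_eq_zero.not.mpr hi; omega
    have hsum : (v i).natAbs ≤ norm1 v := by
      rw [norm1]
      exact Finset.single_le_sum (f := fun x => (v x).natAbs) (fun _ _ => Nat.zero_le _)
        (Finset.mem_univ i)
    have hvi : (v i).natAbs = 1 := by omega
    have hothers : ∀ i', i' ≠ i → v i' = 0 := by
      intro i' hne
      by_contra hc
      have hge' : 1 ≤ (v i').natAbs := by
        have := Int.natAbs_eq_zero.not.mpr hc; omega
      have : (v i).natAbs + (v i').natAbs ≤ norm1 v := by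
        rw [norm1, ← Finset.sum_pair (f := fun x => (v x).natAbs) (Ne.symm hne)]
        exact Finset.sum_le_sum_of_subset (by
          intro x hx
          exact Finset.mem_univ x)
      omega
    refine ⟨i, decide (v i = 1), ?_⟩
    funext i'
    by_cases hii : i' = i
    · subst hii
      rcases Int.natAbs_eq_iff.mp hvi with h1 | h1 <;> simp [unitv, h1]
    · simp [unitv, hii, hothers i' hii]

/-- the ℓ¹ ball of radius one around `j`, as a finset -/
def ball (j : Fin d → ℤ) : Finset (Fin d → ℤ) :=
  insert j ((Finset.univ : Finset (Fin d × Bool)).image fun ib => j + unitv d ib.1 ib.2)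

lemma card_ball (j : Fin d → ℤ) : (ball j).card ≤ 2 * d + 1 := by
  classical
  refine le_trans (Finset.card_insert_le _ _) ?_
  have := Finset.card_image_le (s := (Finset.univ : Finset (Fin d × Bool)))
    (f := fun ib => j + unitv d ib.1 ib.2)
  have hcard : (Finset.univ : Finset (Fin d × Bool)).card = d * 2 := by
    simp [Finset.card_univ]
  omega

lemma mem_ball_of_near {j k : Fin d → ℤ} (h : norm1 (k - j) ≤ 1) : k ∈ ball j := by
  classical
  rcases eq_zero_or_unitv h with h0 | ⟨i, b, hib⟩
  · have : k = j := by
      have := sub_eq_zero.mp h0; exact this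
    simp [ball, this]
  · have : k = j + unitv d i b := by
      rw [← hib]; ring
    rw [this]
    exact Finset.mem_insert_of_mem (Finset.mem_image.mpr ⟨⟨i, b⟩, Finset.mem_univ _, rfl⟩)

lemma wt_add (β γ : MIdx d) : wt (β + γ) = wt β + wt γ := by
  classical
  exact Finsupp.sum_add_index' (fun _ => rfl) (fun _ _ _ => rfl)

lemma apply_le_wt (m : MIdx d) (a : Fin d → ℤ) : m a ≤ wt m := by
  classical
  by_cases h : m a = 0
  · simp [h]
  · exact Finset.single_le_sum (f := fun x => m x) (fun _ _ => Nat.zero_le _)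
      (Finsupp.mem_support_iff.mpr h)

lemma wt_single (j : Fin d → ℤ) : wt (Finsupp.single j 1) = 1 := by
  classical
  rw [wt, Finsupp.sum_single_index] <;> rfl

lemma wt_sub_single {γ : MIdx d} {j : Fin d → ℤ} (h : 1 ≤ γ j) :
    wt (γ - Finsupp.single j 1) + 1 = wt γ := by
  classical
  have hle : Finsupp.single j 1 ≤ γ := Finsupp.single_le_iff.mpr h
  have : (γ - Finsupp.single j 1) + Finsupp.single j 1 = γ := tsub_add_cancel_of_le hle
  calc wt (γ - Finsupp.single j 1) + 1
      = wt (γ - Finsupp.single j 1) + wt (Finsupp.single j 1) := by rw [wt_single]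
    _ = wt ((γ - Finsupp.single j 1) + Finsupp.single j 1) := (wt_add _ _).symm
    _ = wt γ := by rw [this]

lemma support_subset_add_left {β γ : MIdx d} : β.support ⊆ (β + γ).support := by
  intro a ha
  rw [Finsupp.mem_support_iff] at ha ⊢
  simp only [Finsupp.add_apply]
  omega

lemma support_subset_add_right {β γ : MIdx d} : γ.support ⊆ (β + γ).support := by
  intro a ha
  rw [Finsupp.mem_support_iff] at ha ⊢
  simp only [Finsupp.add_apply]
  omega

lemma support_tsub {γ δ : MIdx d} : (γ - δ).support ⊆ γ.support := by
  intro a ha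
  rw [Finsupp.mem_support_iff] at ha ⊢
  rw [Finsupp.tsub_apply] at ha
  omega

lemma norm1_sub_le_mdiam {m : MIdx d} {a b : Fin d → ℤ}
    (ha : a ∈ m.support) (hb : b ∈ m.support) : norm1 (a - b) ≤ mdiam m := by
  classical
  exact Finset.le_sup (f := fun p : (Fin d → ℤ) × (Fin d → ℤ) => norm1 (p.1 - p.2))
    (b := (a, b)) (Finset.mem_product.mpr ⟨ha, hb⟩)

lemma abs_mono_le {q : (Fin d → ℤ) → ℂ} {β γ' : MIdx d} {B : ℝ} (hB : 0 ≤ B)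
    (hq : ∀ a, a ∈ β.support ∪ γ'.support → ‖q a‖ ≤ B) :
    ‖mono q β γ'‖ ≤ B ^ (wt β + wt γ') := by
  classical
  have h1 : ‖β.prod fun a n => q a ^ n‖ ≤ B ^ wt β := by
    rw [Finsupp.prod, norm_prod]
    calc ∏ a ∈ β.support, ‖q a ^ β a‖
        ≤ ∏ a ∈ β.support, B ^ β a := by
          refine Finset.prod_le_prod (fun a _ => by positivity) (fun a ha => ?_)
          rw [norm_pow]
          exact pow_le_pow_left₀ (norm_nonneg _)
            (hq a (Finset.mem_union_left _ ha)) _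
      _ = B ^ wt β := by rw [Finset.prod_pow_eq_pow_sum]; rfl
  have h2 : ‖γ'.prod fun a n => (starRingEnd ℂ) (q a) ^ n‖ ≤ B ^ wt γ' := by
    rw [Finsupp.prod, norm_prod]
    calc ∏ a ∈ γ'.support, ‖(starRingEnd ℂ) (q a) ^ γ' a‖
        ≤ ∏ a ∈ γ'.support, B ^ γ' a := by
          refine Finset.prod_le_prod (fun a _ => by positivity) (fun a ha => ?_)
          rw [norm_pow, Complex.norm_conj]
          exact pow_le_pow_left₀ (norm_nonneg _)
            (hq a (Finset.mem_union_right _ ha)) _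
      _ = B ^ wt γ' := by rw [Finset.prod_pow_eq_pow_sum]; rfl
  rw [mono, norm_mul, pow_add]
  exact mul_le_mul h1 h2 (norm_nonneg _) (by positivity)

end SRO

namespace SRO

lemma rpow_neg_anti {x y s : ℝ} (hx : 0 < x) (hxy : x ≤ y) (hs : 0 ≤ s) :
    y ^ (-s) ≤ x ^ (-s) := by
  have hy : 0 < y := lt_of_lt_of_le hx hxy
  rw [Real.rpow_neg hy.le, Real.rpow_neg hx.le]
  exact inv_anti₀ (Real.rpow_pos_of_pos hx s) (Real.rpow_le_rpow hx.le hxy hs)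

lemma sigma_big {d : ℕ} {σ ε : ℝ} (hd : 1 ≤ d) (hε0 : 0 < ε)
    (hε1 : ε < (2:ℝ) ^ (-(12 * (d:ℤ)) - 9)) (hσ : ε⁻¹ ≤ σ) :
    (60 * (d:ℝ) + 85 ≤ σ) ∧ 0 < σ ∧ ε ≤ 1 := by
  have hz : (2:ℝ) ^ (-(12 * (d:ℤ)) - 9) = ((2:ℝ) ^ (12*d+9 : ℕ))⁻¹ := by
    rw [← zpow_natCast (2:ℝ) (12*d+9), ← zpow_neg]
    congr 1
    push_cast
    ring
  rw [hz] at hε1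
  have hpow_pos : (0:ℝ) < (2:ℝ) ^ (12*d+9 : ℕ) := by positivity
  have hinv : (2:ℝ) ^ (12*d+9 : ℕ) ≤ ε⁻¹ := by
    have := inv_anti₀ hε0 hε1.le
    rwa [inv_inv] at this
  have hnat : (60 * d + 85 : ℕ) ≤ 2 ^ (12*d+9) := by
    have h2 : 12*d < 2^(12*d) := Nat.lt_two_pow_self
    calc 60*d+85 ≤ 512*(12*d+1) := by omega
      _ ≤ 512 * 2^(12*d) := by
          exact Nat.mul_le_mul_left _ (by omega)
      _ = 2^(12*d+9) := by rw [pow_add]; ring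
  have hnat' : (60 * (d:ℝ) + 85) ≤ (2:ℝ) ^ (12*d+9 : ℕ) := by
    have := (Nat.cast_le (α := ℝ)).mpr hnat
    push_cast at this
    linarith
  have h1 : (60 * (d:ℝ) + 85) ≤ σ := le_trans hnat' (le_trans hinv hσ)
  have hε_le1 : ε ≤ 1 := by
    have : ((2:ℝ) ^ (12*d+9 : ℕ))⁻¹ ≤ 1 := by
      rw [inv_le_one_iff₀]
      right
      exact one_le_pow₀ (by norm_num)
    linarith
  refine ⟨h1, by linarith, hε_le1⟩

end SRO

namespace SRO2

lemma num_main {d : ℕ} {σ ε : ℝ} (hd : 1 ≤ d) (hε0 : 0 < ε)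
    (hε1 : ε < (2:ℝ) ^ (-(12 * (d:ℤ)) - 9)) (hσ : ε⁻¹ ≤ σ) {n : ℕ} (hn : 1 ≤ n) :
    12 * 7^(4*d+2) * (2*ε*(max (n:ℝ) 2) ^ (-σ))^6 * (ε^(-3:ℤ) * (2:ℝ)^ε⁻¹)
      ≤ 1/2 * ε^2 * (1 + (n:ℝ)) ^ (-(3*σ)) := by
  obtain ⟨hσ5, hσ0, hε_le1⟩ := SRO.sigma_big hd hε0 hε1 hσ
  set M : ℝ := max (n:ℝ) 2 with hMdef
  have hM2 : (2:ℝ) ≤ M := le_max_right _ _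
  have hM0 : (0:ℝ) < M := by linarith
  have hn1 : (1:ℝ) ≤ (n:ℝ) := by exact_mod_cast hn
  have ha0 : (0:ℝ) < 1 + (n:ℝ) := by linarith
  have hMn : (n:ℝ) ≤ M := le_max_left _ _
  have h4a : 4*(1+(n:ℝ)) ≤ 3*M^2 := by nlinarith [hM2, hMn]
  -- rpow algebra
  have hA1 : (M ^ (-σ))^(6:ℕ) = (M^(6:ℕ)) ^ (-σ) := by
    rw [← Real.rpow_natCast (M ^ (-σ)) 6, ← Real.rpow_mul hM0.le,
        ← Real.rpow_natCast M 6, ← Real.rpow_mul hM0.le]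
    congr 1
    push_cast
    ring
  have ha3 : (1+(n:ℝ))^(-(3*σ)) = ((1+(n:ℝ))^(3:ℕ)) ^ (-σ) := by
    rw [← Real.rpow_natCast (1+(n:ℝ)) 3, ← Real.rpow_mul ha0.le]
    congr 1
    push_cast
    ring
  have hcube : ((1+(n:ℝ))^(3:ℕ)) ≤ (27/64) * M^(6:ℕ) := by
    have h3 : (4*(1+(n:ℝ)))^3 ≤ (3*M^2)^3 := pow_le_pow_left₀ (by positivity) h4a 3
    nlinarith [h3]
  have hA2low : (64/27:ℝ)^σ * (M^(6:ℕ))^(-σ) ≤ ((1+(n:ℝ))^(3:ℕ))^(-σ) := by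
    have h1 : ((27/64) * M^(6:ℕ) : ℝ)^(-σ) ≤ ((1+(n:ℝ))^(3:ℕ))^(-σ) :=
      SRO.rpow_neg_anti (by positivity) hcube hσ0.le
    have h2 : ((27/64) * M^(6:ℕ) : ℝ)^(-σ) = (64/27:ℝ)^σ * (M^(6:ℕ))^(-σ) := by
      rw [Real.mul_rpow (by norm_num) (by positivity)]
      congr 1
      rw [Real.rpow_neg (by norm_num), ← Real.inv_rpow (by norm_num)]
      norm_num
    linarith [h2 ▸ h1]
  have h2pow : (2:ℝ)^ε⁻¹ ≤ (2:ℝ)^σ := Real.rpow_le_rpow_of_exponent_le one_le_two hσ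
  -- key scalar inequality
  have hKnum : (1536:ℝ) * 7^(4*d+2) * ε * ((27/32):ℝ)^σ ≤ 1 := by
    have e1 : (2:ℝ) ≤ (32/27:ℝ)^(5:ℕ) := by norm_num
    have h32 : ((32/27:ℝ))^σ = ((32/27:ℝ)^(5:ℕ))^(σ/5) := by
      rw [← Real.rpow_natCast (32/27:ℝ) 5, ← Real.rpow_mul (by norm_num : (0:ℝ) ≤ 32/27)]
      congr 1
      push_cast
      ring
    have h2a : (2:ℝ)^(σ/5) ≤ (32/27:ℝ)^σ := by
      rw [h32]
      exact Real.rpow_le_rpow (by norm_num) e1 (by linarith)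
    have h2b : (2:ℝ)^(((12*d+17 : ℕ)):ℝ) ≤ (2:ℝ)^(σ/5) := by
      apply Real.rpow_le_rpow_of_exponent_le one_le_two
      push_cast
      linarith
    have h2c : (1536:ℝ) * 7^(4*d+2) ≤ (2:ℝ)^(((12*d+17:ℕ)):ℝ) := by
      rw [Real.rpow_natCast]
      have h78 : (7:ℝ)^(4*d+2) ≤ (8:ℝ)^(4*d+2) := pow_le_pow_left₀ (by norm_num) (by norm_num) _
      have h8pos : (0:ℝ) ≤ (8:ℝ)^(4*d+2) := by positivity
      calc (1536:ℝ)*7^(4*d+2) ≤ 2048 * (8:ℝ)^(4*d+2) := by nlinarith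
        _ = 2^(12*d+17) := by
            rw [show (8:ℝ) = 2^3 by norm_num, ← pow_mul,
              show (2048:ℝ) = 2^11 by norm_num, ← pow_add]
            congr 1
            ring
    have hXpos : (0:ℝ) < (32/27:ℝ)^σ := Real.rpow_pos_of_pos (by norm_num) σ
    have hX : ((27/32):ℝ)^σ = ((32/27:ℝ)^σ)⁻¹ := by
      rw [← Real.inv_rpow (by norm_num : (0:ℝ) ≤ 32/27)]
      norm_num
    have hK : (1536:ℝ) * 7^(4*d+2) ≤ (32/27:ℝ)^σ := le_trans h2c (le_trans h2b h2a)
    rw [hX]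
    calc (1536:ℝ) * 7^(4*d+2) * ε * ((32/27:ℝ)^σ)⁻¹
        ≤ (1536:ℝ) * 7^(4*d+2) * 1 * ((32/27:ℝ)^σ)⁻¹ := by
          apply mul_le_mul_of_nonneg_right _ (inv_pos.mpr hXpos).le
          exact mul_le_mul_of_nonneg_left hε_le1 (by positivity)
      _ ≤ (32/27:ℝ)^σ * ((32/27:ℝ)^σ)⁻¹ := by
          rw [mul_one]
          exact mul_le_mul_of_nonneg_right hK (inv_pos.mpr hXpos).le
      _ = 1 := mul_inv_cancel₀ (ne_of_gt hXpos)
  -- assemble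
  have hεz : (ε:ℝ)^(-3:ℤ) = (ε^(3:ℕ))⁻¹ := by
    rw [show ((-3:ℤ)) = -((3:ℕ):ℤ) by norm_num, zpow_neg, zpow_natCast]
  have hmul : (64/27:ℝ)^σ * (27/32:ℝ)^σ = (2:ℝ)^σ := by
    rw [← Real.mul_rpow (by norm_num) (by norm_num)]
    norm_num
  have hP0 : (0:ℝ) ≤ (M^(6:ℕ))^(-σ) := (Real.rpow_pos_of_pos (by positivity) _).le
  have hLHS : 12 * 7^(4*d+2) * (2*ε*M ^ (-σ))^6 * (ε^(-3:ℤ) * (2:ℝ)^ε⁻¹)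
      = 768 * 7^(4*d+2) * ε^3 * (2:ℝ)^ε⁻¹ * ((M^(6:ℕ))^(-σ)) := by
    have hεne : ε ≠ 0 := ne_of_gt hε0
    rw [hεz, ← hA1]
    field_simp
    ring
  rw [hLHS, ha3]
  have step1 : 768 * 7^(4*d+2) * ε^3 * (2:ℝ)^ε⁻¹ * ((M^(6:ℕ))^(-σ))
      ≤ 768 * 7^(4*d+2) * ε^3 * (2:ℝ)^σ * ((M^(6:ℕ))^(-σ)) := by
    gcongr
  have step2 : 768 * 7^(4*d+2) * ε^3 * (2:ℝ)^σ ≤ 1/2 * ε^2 * (64/27:ℝ)^σ := by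
    calc 768 * 7^(4*d+2) * ε^3 * (2:ℝ)^σ
        = 1/2 * ε^2 * (64/27:ℝ)^σ * ((1536:ℝ) * 7^(4*d+2) * ε * ((27/32):ℝ)^σ) := by
          rw [show (768:ℝ) * 7^(4*d+2) * ε^3 * (2:ℝ)^σ
              = 768 * 7^(4*d+2) * ε^3 * ((64/27:ℝ)^σ * (27/32:ℝ)^σ) by rw [hmul]]
          ring
      _ ≤ 1/2 * ε^2 * (64/27:ℝ)^σ * 1 := by
          apply mul_le_mul_of_nonneg_left hKnum
          positivity
      _ = 1/2 * ε^2 * (64/27:ℝ)^σ := by ring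
  calc 768 * 7^(4*d+2) * ε^3 * (2:ℝ)^ε⁻¹ * ((M^(6:ℕ))^(-σ))
      ≤ 768 * 7^(4*d+2) * ε^3 * (2:ℝ)^σ * ((M^(6:ℕ))^(-σ)) := step1
    _ ≤ (1/2 * ε^2 * (64/27:ℝ)^σ) * ((M^(6:ℕ))^(-σ)) :=
        mul_le_mul_of_nonneg_right step2 hP0
    _ = 1/2 * ε^2 * ((64/27:ℝ)^σ * ((M^(6:ℕ))^(-σ))) := by ring
    _ ≤ 1/2 * ε^2 * ((1+(n:ℝ))^(3:ℕ))^(-σ) := by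
        apply mul_le_mul_of_nonneg_left hA2low
        positivity

end SRO2

namespace SRO3

lemma tsum_bound {d : ℕ} (R : MIdx d → MIdx d → ℂ)
    (hRbd : ∀ β γ : MIdx d, wt (β + γ) = 6 → mdiam (β + γ) ≤ 1 → ‖R β γ‖ ≤ 1)
    (Q : (Fin d → ℤ) → ℂ) (j : Fin d → ℤ) {B : ℝ} (hB0 : 0 ≤ B)
    (hq : ∀ k, norm1 (k - j) ≤ 1 → ‖Q k‖ ≤ B) :
    ‖∑' p : PairIdx d,
        R p.1.1 p.1.2 * ((p.1.2 j : ℕ) : ℂ) * mono Q p.1.1 (p.1.2 - Finsupp.single j 1)‖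
      ≤ 6 * 7 ^ (4 * d + 2) * B ^ 5 := by
  classical
  set f : PairIdx d → ℂ := fun p =>
    R p.1.1 p.1.2 * ((p.1.2 j : ℕ) : ℂ) * mono Q p.1.1 (p.1.2 - Finsupp.single j 1) with hf
  set F0 : Finset (MIdx d) := (SRO.ball j).finsupp (fun _ => Finset.range 7) with hF0
  set F : Finset (PairIdx d) :=
    (F0 ×ˢ F0).subtype (fun p => wt (p.1 + p.2) = 6 ∧ mdiam (p.1 + p.2) ≤ 1) with hF
  -- support of a relevant pair is inside the ball
  have hsupp : ∀ p : PairIdx d, p.1.2 j ≠ 0 → (p.1.1 + p.1.2).support ⊆ SRO.ball j := by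
    intro p hγj a ha
    have hj : j ∈ (p.1.1 + p.1.2).support := by
      rw [Finsupp.mem_support_iff]
      simp only [Finsupp.add_apply]
      omega
    exact SRO.mem_ball_of_near (le_trans (SRO.norm1_sub_le_mdiam ha hj) p.2.2)
  have hval : ∀ p : PairIdx d, ∀ a, p.1.1 a ≤ 6 ∧ p.1.2 a ≤ 6 := by
    intro p a
    have h1 : (p.1.1 + p.1.2) a ≤ wt (p.1.1 + p.1.2) := SRO.apply_le_wt _ a
    rw [p.2.1] at h1
    simp only [Finsupp.add_apply] at h1
    omega
  have hmem : ∀ p : PairIdx d, p ∉ F → f p = 0 := by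
    intro p hp
    by_contra h0
    have hγj : p.1.2 j ≠ 0 := by
      intro hz
      apply h0
      simp [hf, hz]
    apply hp
    rw [hF, Finset.mem_subtype]
    have hsub := hsupp p hγj
    refine Finset.mem_product.mpr ⟨?_, ?_⟩
    · rw [hF0, Finset.mem_finsupp_iff]
      refine ⟨subset_trans SRO.support_subset_add_left hsub, fun i _ => ?_⟩
      rw [Finset.mem_range]
      have := (hval p i).1
      omega
    · rw [hF0, Finset.mem_finsupp_iff]
      refine ⟨subset_trans SRO.support_subset_add_right hsub, fun i _ => ?_⟩
      rw [Finset.mem_range]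
      have := (hval p i).2
      omega
  rw [tsum_eq_sum hmem]
  have hterm : ∀ p ∈ F, ‖f p‖ ≤ 6 * B ^ 5 := by
    intro p _
    by_cases hγj : p.1.2 j = 0
    · simp [hf, hγj]
      positivity
    · have hγ1 : 1 ≤ p.1.2 j := by omega
      have hwt5 : wt p.1.1 + wt (p.1.2 - Finsupp.single j 1) = 5 := by
        have h1 := SRO.wt_sub_single (γ := p.1.2) (j := j) hγ1
        have h2 := SRO.wt_add p.1.1 p.1.2
        have h3 := p.2.1
        omega
      have hmono : ‖mono Q p.1.1 (p.1.2 - Finsupp.single j 1)‖ ≤ B ^ 5 := by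
        rw [← hwt5]
        apply SRO.abs_mono_le hB0
        intro a ha
        have haball : a ∈ SRO.ball j := by
          apply hsupp p hγj
          rcases Finset.mem_union.mp ha with h | h
          · exact SRO.support_subset_add_left h
          · exact SRO.support_subset_add_right (SRO.support_tsub h)
        -- from ball membership get norm1 (a - j) ≤ 1
        have hnear : norm1 (a - j) ≤ 1 := by
          rw [SRO.ball] at haball
          rcases Finset.mem_insert.mp haball with h | h
          · subst h
            simp [norm1]
          · obtain ⟨ib, _, hib⟩ := Finset.mem_image.mp h
            rw [← hib]
            have : j + SRO.unitv d ib.1 ib.2 - j = SRO.unitv d ib.1 ib.2 := by ring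
            rw [this]
            by_cases hb : ib.2 <;>
              simp [SRO.unitv, norm1, hb, Finset.sum_ite_eq', apply_ite Int.natAbs]
        exact hq a hnear
      have hR : ‖R p.1.1 p.1.2‖ ≤ 1 := hRbd _ _ p.2.1 p.2.2
      have hγ6 : ((p.1.2 j : ℕ) : ℝ) ≤ 6 := by
        have h1 : p.1.2 j ≤ (p.1.1 + p.1.2) j := by
          simp only [Finsupp.add_apply]; omega
        have h2 := SRO.apply_le_wt (p.1.1 + p.1.2) j
        rw [p.2.1] at h2
        exact_mod_cast le_trans h1 h2
      rw [hf]
      simp only [norm_mul, Complex.norm_natCast]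
      calc ‖R p.1.1 p.1.2‖ * ((p.1.2 j : ℕ) : ℝ)
            * ‖mono Q p.1.1 (p.1.2 - Finsupp.single j 1)‖
          ≤ 1 * 6 * B ^ 5 := by
            apply mul_le_mul _ hmono (norm_nonneg _) (by norm_num)
            exact mul_le_mul hR hγ6 (by positivity) zero_le_one
        _ = 6 * B ^ 5 := by ring
  have hcardF : (F.card : ℝ) ≤ 7 ^ (4 * d + 2) := by
    have h1 : F.card ≤ (F0 ×ˢ F0).card := by
      rw [hF, Finset.card_subtype]
      exact Finset.card_filter_le _ _
    have h2 : F0.card = 7 ^ (SRO.ball j).card := by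
      rw [hF0, Finset.card_finsupp]
      simp [Finset.prod_const, Finset.card_range]
    have h3 : (F0 ×ˢ F0).card = F0.card * F0.card := Finset.card_product _ _
    have h4 : F.card ≤ 7 ^ (4 * d + 2) := by
      calc F.card ≤ F0.card * F0.card := h1.trans_eq h3
        _ = 7 ^ (SRO.ball j).card * 7 ^ (SRO.ball j).card := by rw [h2]
        _ = 7 ^ ((SRO.ball j).card + (SRO.ball j).card) := (pow_add 7 _ _).symm
        _ ≤ 7 ^ (4 * d + 2) := by
            apply Nat.pow_le_pow_right (by norm_num)
            have := SRO.card_ball j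
            omega
    exact_mod_cast h4
  calc ‖∑ p ∈ F, f p‖
      ≤ ∑ p ∈ F, ‖f p‖ := norm_sum_le _ _
    _ ≤ F.card • (6 * B ^ 5) := Finset.sum_le_card_nsmul _ _ _ hterm
    _ = (F.card : ℝ) * (6 * B ^ 5) := nsmul_eq_mul _ _
    _ ≤ 7 ^ (4 * d + 2) * (6 * B ^ 5) := by
        apply mul_le_mul_of_nonneg_right hcardF (by positivity)
    _ = 6 * 7 ^ (4 * d + 2) * B ^ 5 := by ring

end SRO3

set_option maxHeartbeats 2000000

/-- Theorem 2 of the paper, exponential-time form.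
Under the same assumptions as the polynomial-time statement but with `σ ≥ ε⁻¹`
(which forces `σ ≥ d+1`), the localization estimate holds for the exponentially
long time scale `|t| < ε^{-3} · 2^{ε⁻¹}`. -/
theorem stability_short_range_oscillators_exponential
    (d : ℕ) (hd : 1 ≤ d) (σ ε : ℝ)
    (hε0 : 0 < ε) (hε1 : ε < (2 : ℝ) ^ (-(12 * (d : ℤ)) - 9))
    (hσ : ε⁻¹ ≤ σ)
    (v : (Fin d → ℤ) → ℝ) (hv : ∀ j, v j ∈ Set.Icc (0 : ℝ) 1)
    (R : MIdx d → MIdx d → ℂ)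
    (hRbd : ∀ β γ : MIdx d, wt (β + γ) = 6 → mdiam (β + γ) ≤ 1 →
      ‖R β γ‖ ≤ 1)
    (hRsym : ∀ β γ : MIdx d, wt (β + γ) = 6 → mdiam (β + γ) ≤ 1 →
      R β γ = (starRingEnd ℂ) (R γ β))
    (q q' : ℝ → (Fin d → ℤ) → ℂ)
    (hderiv : ∀ (t : ℝ) (j : Fin d → ℤ), HasDerivAt (fun s => q s j) (q' t j) t)
    (hcont : ∀ t₀ : ℝ, ∀ δ > (0 : ℝ), ∃ r > (0 : ℝ), ∀ t : ℝ, |t - t₀| < r →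
      ∀ j, ‖q t j - q t₀ j‖ * (1 + (jbra j : ℝ)) ^ σ ≤ δ)
    (hode : ∀ (t : ℝ) (j : Fin d → ℤ),
      Complex.I * q' t j =
        (v j : ℂ) * q t j + ((‖q t j‖ ^ 2 : ℝ) : ℂ) * q t j +
          ∑' p : PairIdx d,
            R p.1.1 p.1.2 * (p.1.2 j : ℂ) *
              mono (q t) p.1.1 (p.1.2 - Finsupp.single j 1))
    (hinit : ∀ j, ‖q 0 j‖ * (1 + (norm1 j : ℝ)) ^ σ ≤ ε)
    (hzero : q 0 0 = 0) :
    ∀ t : ℝ, |t| < ε ^ (-3 : ℤ) * (2 : ℝ) ^ ε⁻¹ →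
      ∀ j : Fin d → ℤ,
        |‖q t j‖ ^ 2 - ‖q 0 j‖ ^ 2|
          < ε ^ 2 * (1 + (jbra j : ℝ)) ^ (-(3 * σ)) := by
  classical
  obtain ⟨hσ60, hσ0, hεle1⟩ := SRO.sigma_big hd hε0 hε1 hσ
  set w : (Fin d → ℤ) → ℝ := fun k => (1 + (jbra k : ℝ)) ^ (-σ) with hw
  have hbase : ∀ k : Fin d → ℤ, (2:ℝ) ≤ 1 + (jbra k : ℝ) := by
    intro k
    have h1 := SRO.one_le_jbra k
    have h2 : (1:ℝ) ≤ (jbra k : ℝ) := by exact_mod_cast h1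
    linarith
  have hw_pos : ∀ k, 0 < w k := fun k => Real.rpow_pos_of_pos (by linarith [hbase k]) _
  have hw_le1 : ∀ k, w k ≤ 1 := fun k =>
    Real.rpow_le_one_of_one_le_of_nonpos (by linarith [hbase k]) (by linarith)
  have hconv : ∀ (x δ : ℝ) (k : Fin d → ℤ),
      x * (1 + (jbra k:ℝ)) ^ σ ≤ δ → x ≤ δ * w k := by
    intro x δ k h
    have hb : (0:ℝ) < 1 + (jbra k:ℝ) := by linarith [hbase k]
    have hc : (0:ℝ) < (1 + (jbra k:ℝ)) ^ σ := Real.rpow_pos_of_pos hb _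
    have hx : x ≤ δ / (1 + (jbra k:ℝ)) ^ σ := (le_div_iff₀ hc).mpr h
    rwa [div_eq_mul_inv, ← Real.rpow_neg hb.le] at hx
  have hinit' : ∀ k, ‖q 0 k‖ ≤ ε * w k := by
    intro k
    by_cases hk : k = (0 : Fin d → ℤ)
    · subst hk
      rw [hzero]
      simp only [norm_zero]
      positivity
    · have h1 : norm1 k ≠ 0 := fun h => hk (SRO.norm1_eq_zero.mp h)
      have h2 : jbra k = norm1 k := max_eq_left (by omega)
      apply hconv _ _ k
      rw [h2]
      exact hinit k
  set Sm : ℝ → (Fin d → ℤ) → ℂ := fun s l => ∑' p : PairIdx d,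
    R p.1.1 p.1.2 * (p.1.2 l : ℂ) * mono (q s) p.1.1 (p.1.2 - Finsupp.single l 1) with hSm
  have hq'eq : ∀ (s : ℝ) (l : Fin d → ℤ), q' s l =
      -Complex.I * ((v l : ℂ) * q s l + ((‖q s l‖ ^ 2 : ℝ) : ℂ) * q s l + Sm s l) := by
    intro s l
    have h := hode s l
    calc q' s l = -Complex.I * (Complex.I * q' s l) := by
          rw [← mul_assoc, neg_mul, Complex.I_mul_I, neg_neg, one_mul]
      _ = _ := by rw [h]
  have hderivSq : ∀ (s : ℝ) (k : Fin d → ℤ), HasDerivAt (fun u => Complex.normSq (q u k))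
      (2 * (-Complex.I * Sm s k * (starRingEnd ℂ) (q s k)).re) s := by
    intro s k
    have h1 : HasDerivAt (fun u => q u k) (q' s k) s := hderiv s k
    have h2 : HasDerivAt (fun u => (starRingEnd ℂ) (q u k)) ((starRingEnd ℂ) (q' s k)) s := by
      simpa using h1.star
    have h3 : HasDerivAt (fun u => q u k * (starRingEnd ℂ) (q u k)) _ s := h1.mul h2
    have h4 := (Complex.reCLM.hasFDerivAt
      (x := q s k * (starRingEnd ℂ) (q s k))).comp_hasDerivAt s h3
    have heq : (⇑Complex.reCLM ∘ fun u => q u k * (starRingEnd ℂ) (q u k))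
        = fun u => Complex.normSq (q u k) := by
      funext u
      simp [Complex.mul_conj]
    rw [heq] at h4
    refine h4.congr_deriv ?_
    rw [hq'eq s k]
    simp only [Complex.reCLM_apply, map_add, map_mul, map_neg, Complex.conj_I,
      Complex.conj_conj, Complex.conj_ofReal, Complex.add_re, Complex.add_im,
      Complex.mul_re, Complex.mul_im, Complex.neg_re, Complex.neg_im,
      Complex.I_re, Complex.I_im, Complex.ofReal_re, Complex.ofReal_im,
      Complex.conj_re, Complex.conj_im]
    ring
  -- core a priori estimate
  intro t ht j
  have core : ∀ r : ℝ, r ≤ |t| →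
      (∀ s : ℝ, |s| ≤ r → ∀ k, ‖q s k‖ ≤ 2*ε*w k) →
      ∀ s : ℝ, |s| ≤ r → ∀ k, |Complex.normSq (q s k) - Complex.normSq (q 0 k)|
        ≤ 1/2 * ε^2 * (1 + (jbra k : ℝ)) ^ (-(3*σ)) := by
    intro r hrt hboot s hs k
    have hr0 : 0 ≤ r := le_trans (abs_nonneg s) hs
    set M : ℝ := max ((jbra k : ℕ) : ℝ) 2 with hM
    have hM0 : (0:ℝ) < M := lt_of_lt_of_le two_pos (le_max_right _ _)
    set B : ℝ := 2*ε*M^(-σ) with hB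
    have hB0 : (0:ℝ) ≤ B := by
      have := Real.rpow_pos_of_pos hM0 (-σ)
      positivity
    set C : ℝ := 12 * 7^(4*d+2) * B^6 with hC
    have hC0 : (0:ℝ) ≤ C := by positivity
    have hDbd : ∀ u : ℝ, |u| ≤ r →
        |2 * (-Complex.I * Sm u k * (starRingEnd ℂ) (q u k)).re| ≤ C := by
      intro u hu
      have hball : ∀ l, norm1 (l - k) ≤ 1 → ‖q u l‖ ≤ B := by
        intro l hl
        have h1 : ‖q u l‖ ≤ 2*ε*w l := hboot u hu l
        have hMl : M ≤ 1 + (jbra l : ℝ) := by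
          have hnear : jbra k ≤ jbra l + 1 := by
            apply SRO.jbra_le_near
            rw [show k - l = -(l - k) by ring, SRO.norm1_neg]
            exact hl
          have h2 : ((jbra k : ℕ):ℝ) ≤ 1 + (jbra l :ℝ) := by
            have : ((jbra k : ℕ):ℝ) ≤ ((jbra l : ℕ):ℝ) + 1 := by exact_mod_cast hnear
            linarith
          exact max_le h2 (hbase l)
        have h2 : w l ≤ M^(-σ) := SRO.rpow_neg_anti hM0 hMl hσ0.le
        calc ‖q u l‖ ≤ 2*ε*w l := h1
          _ ≤ B := by
            rw [hB]
            exact mul_le_mul_of_nonneg_left h2 (by positivity)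
      have hS : ‖Sm u k‖ ≤ 6 * 7^(4*d+2) * B^5 :=
        SRO3.tsum_bound R hRbd (q u) k hB0 hball
      have hz : ‖q u k‖ ≤ B := by
        apply hball k
        rw [sub_self]
        simp [norm1]
      have habs : |(-Complex.I * Sm u k * (starRingEnd ℂ) (q u k)).re|
          ≤ ‖Sm u k‖ * ‖q u k‖ := by
        calc |(-Complex.I * Sm u k * (starRingEnd ℂ) (q u k)).re|
            ≤ ‖-Complex.I * Sm u k * (starRingEnd ℂ) (q u k)‖ :=
              Complex.abs_re_le_norm _
          _ = ‖Sm u k‖ * ‖q u k‖ := by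
              simp [norm_mul, Complex.norm_conj]
      calc |2 * (-Complex.I * Sm u k * (starRingEnd ℂ) (q u k)).re|
          = 2 * |(-Complex.I * Sm u k * (starRingEnd ℂ) (q u k)).re| := by
            rw [abs_mul]
            norm_num
        _ ≤ 2 * (‖Sm u k‖ * ‖q u k‖) := by linarith
        _ ≤ 2 * ((6 * 7^(4*d+2) * B^5) * B) := by
            apply mul_le_mul_of_nonneg_left _ (by norm_num)
            exact mul_le_mul hS hz (norm_nonneg _) (by positivity)
        _ = C := by rw [hC]; ring
    have hmvt : |Complex.normSq (q s k) - Complex.normSq (q 0 k)| ≤ C * |s - 0| := by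
      have hIcc : Convex ℝ (Set.Icc (-r) r) := convex_Icc _ _
      have h1 : ∀ u ∈ Set.Icc (-r) r, HasDerivWithinAt (fun x => Complex.normSq (q x k))
          (2 * (-Complex.I * Sm u k * (starRingEnd ℂ) (q u k)).re) (Set.Icc (-r) r) u :=
        fun u _ => (hderivSq u k).hasDerivWithinAt
      have h2 : ∀ u ∈ Set.Icc (-r) r,
          ‖2 * (-Complex.I * Sm u k * (starRingEnd ℂ) (q u k)).re‖ ≤ C := by
        intro u hu
        rw [Real.norm_eq_abs]
        exact hDbd u (abs_le.mpr ⟨hu.1, hu.2⟩)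
      have h3 := hIcc.norm_image_sub_le_of_norm_hasDerivWithin_le h1 h2
        (Set.mem_Icc.mpr ⟨neg_nonpos.mpr hr0, hr0⟩)
        (Set.mem_Icc.mpr ⟨(abs_le.mp hs).1, (abs_le.mp hs).2⟩)
      rwa [Real.norm_eq_abs, Real.norm_eq_abs] at h3
    have hfinal : C * |s - 0| ≤ 1/2 * ε^2 * (1 + (jbra k : ℝ)) ^ (-(3*σ)) := by
      have h1 : |s - 0| ≤ ε ^ (-3:ℤ) * (2:ℝ)^ε⁻¹ := by
        rw [sub_zero]
        exact le_trans hs (le_trans hrt (le_of_lt ht))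
      calc C * |s - 0| ≤ C * (ε ^ (-3:ℤ) * (2:ℝ)^ε⁻¹) := mul_le_mul_of_nonneg_left h1 hC0
        _ = 12 * 7^(4*d+2) * (2*ε*M^(-σ))^6 * (ε^(-3:ℤ) * (2:ℝ)^ε⁻¹) := by rw [hC, hB]
        _ ≤ 1/2 * ε^2 * (1 + ((jbra k : ℕ)):ℝ) ^ (-(3*σ)) :=
            SRO2.num_main hd hε0 hε1 hσ (SRO.one_le_jbra k)
    calc |Complex.normSq (q s k) - Complex.normSq (q 0 k)| ≤ C * |s - 0| := hmvt
      _ ≤ 1/2 * ε^2 * (1 + (jbra k : ℝ)) ^ (-(3*σ)) := hfinal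
  -- bootstrap / continuous induction
  have boot : ∀ s : ℝ, |s| ≤ |t| → ∀ k, ‖q s k‖ ≤ 2*ε*w k := by
    set A : Set ℝ := {r | r ∈ Set.Icc (0:ℝ) |t| ∧
      ∀ s : ℝ, |s| ≤ r → ∀ k, ‖q s k‖ ≤ 2*ε*w k} with hA
    have hA0 : (0:ℝ) ∈ A := by
      constructor
      · exact ⟨le_refl 0, abs_nonneg t⟩
      · intro s hs k
        have hs0 : s = 0 := abs_nonpos_iff.mp hs
        subst hs0
        have := hinit' k
        nlinarith [hw_pos k]
    have hAne : A.Nonempty := ⟨0, hA0⟩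
    have hAbdd : BddAbove A := ⟨|t|, fun x hx => hx.1.2⟩
    set r' : ℝ := sSup A with hr'
    have hr'le : r' ≤ |t| := csSup_le hAne (fun x hx => hx.1.2)
    have hr'0 : 0 ≤ r' := le_csSup hAbdd hA0
    have hPr' : ∀ s : ℝ, |s| ≤ r' → ∀ k, ‖q s k‖ ≤ 2*ε*w k := by
      intro s hs k
      rcases lt_or_eq_of_le hs with hlt | heq
      · obtain ⟨a, haA, hlt'⟩ := exists_lt_of_lt_csSup hAne hlt
        exact haA.2 s (le_of_lt hlt') k
      · apply le_of_forall_pos_le_add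
        intro δ hδ
        obtain ⟨rr, hrr0, hrrP⟩ := hcont s δ hδ
        have hlt2 : r' - min rr 1 / 2 < r' := by
          have : (0:ℝ) < min rr 1 := lt_min hrr0 one_pos
          linarith
        obtain ⟨a, haA, hagt⟩ := exists_lt_of_lt_csSup hAne hlt2
        have ha0 : 0 ≤ a := haA.1.1
        have ha_le : a ≤ r' := le_csSup hAbdd haA
        have hrr1 : min rr 1 ≤ rr := min_le_left _ _
        -- pick u close to s with |u| ≤ a
        have key : ∃ u : ℝ, |u| ≤ a ∧ |u - s| < rr := by
          rcases le_or_gt 0 s with hsp | hsn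
          · refine ⟨a, by rw [abs_of_nonneg ha0], ?_⟩
            have hseq : s = r' := by rw [← abs_of_nonneg hsp, heq]
            rw [abs_of_nonpos (by linarith), hseq]
            linarith
          · refine ⟨-a, by rw [abs_neg, abs_of_nonneg ha0], ?_⟩
            have hseq : s = -r' := by
              have := abs_of_neg hsn
              linarith [heq ▸ this]
            rw [hseq]
            rw [show -a - -r' = r' - a by ring, abs_of_nonneg (by linarith)]
            linarith
        obtain ⟨u, hua, hus⟩ := key
        have hqu : ‖q u k‖ ≤ 2*ε*w k := haA.2 u hua k
        have hdiff : ‖q u k - q s k‖ ≤ δ * w k :=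
          hconv _ _ k (hrrP u hus k)
        have htri : ‖q s k‖ ≤ ‖q u k‖ + ‖q u k - q s k‖ := by
          calc ‖q s k‖ = ‖q u k + (q s k - q u k)‖ := by ring_nf
            _ ≤ ‖q u k‖ + ‖q s k - q u k‖ := norm_add_le _ _
            _ = ‖q u k‖ + ‖q u k - q s k‖ := by
                rw [norm_sub_rev]
        have hwk1 : δ * w k ≤ δ := by nlinarith [hw_le1 k, hw_pos k]
        linarith
    by_cases hcase : r' < |t|
    · exfalso
      have himp : ∀ s : ℝ, |s| ≤ r' → ∀ k, ‖q s k‖ ≤ 3/2*ε*w k := by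
        intro s hs k
        have hcore := core r' hr'le hPr' s hs k
        have h0 : ‖q 0 k‖ ≤ ε * w k := hinit' k
        have hcube : (1 + (jbra k:ℝ)) ^ (-(3*σ)) = w k ^ 3 := by
          rw [hw]
          simp only
          rw [← Real.rpow_natCast ((1 + (jbra k:ℝ)) ^ (-σ)) 3,
            ← Real.rpow_mul (by linarith [hbase k] : (0:ℝ) ≤ 1 + (jbra k:ℝ))]
          congr 1
          push_cast
          ring
        rw [hcube] at hcore
        have hsq : ‖q s k‖^2 ≤ (3/2*ε*w k)^2 := by
          have e1 : Complex.normSq (q s k) ≤ Complex.normSq (q 0 k) + 1/2*ε^2*w k^3 := by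
            have := (abs_le.mp hcore).2
            linarith
          rw [← Complex.sq_norm, ← Complex.sq_norm (q 0 k)] at e1
          have e2 : ‖q 0 k‖^2 ≤ (ε*w k)^2 :=
            pow_le_pow_left₀ (norm_nonneg _) h0 2
          have e3 : w k ^ 3 ≤ w k ^ 2 :=
            pow_le_pow_of_le_one (hw_pos k).le (hw_le1 k) (by norm_num)
          nlinarith [hε0, hw_pos k]
        have hb0 : (0:ℝ) ≤ 3/2*ε*w k := by positivity
        exact (pow_le_pow_iff_left₀ (norm_nonneg _) hb0 two_ne_zero).mp hsq
      obtain ⟨r1, hr10, hcont1⟩ := hcont r' (ε/2) (by positivity)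
      obtain ⟨r2, hr20, hcont2⟩ := hcont (-r') (ε/2) (by positivity)
      set rr : ℝ := min r1 r2 with hrr
      have hrr0 : 0 < rr := lt_min hr10 hr20
      set rnew : ℝ := min |t| (r' + rr/2) with hrnew
      have hnew1 : r' < rnew := lt_min hcase (by linarith)
      have hnewA : rnew ∈ A := by
        constructor
        · exact ⟨by linarith, min_le_left _ _⟩
        · intro s hs k
          rcases le_or_gt |s| r' with h | h
          · exact hPr' s h k
          · have hsub : |s| - r' ≤ rr/2 := by
              have h1 : |s| ≤ r' + rr/2 := le_trans hs (min_le_right _ _)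
              linarith
            have step : ∃ u : ℝ, (|u| ≤ r') ∧ ‖q s k - q u k‖ ≤ ε/2 * w k := by
              rcases le_or_gt 0 s with hsp | hsn
              · refine ⟨r', by rw [abs_of_nonneg hr'0], ?_⟩
                apply hconv _ _ k
                apply hcont1
                rw [abs_of_nonneg hsp] at h hsub
                rw [abs_of_nonneg (by linarith : (0:ℝ) ≤ s - r')]
                have : rr ≤ r1 := min_le_left _ _
                linarith
              · refine ⟨-r', by rw [abs_neg, abs_of_nonneg hr'0], ?_⟩
                apply hconv _ _ k
                apply hcont2
                rw [abs_of_neg hsn] at h hsub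
                rw [show s - -r' = -(-s - r') by ring, abs_neg,
                  abs_of_nonneg (by linarith : (0:ℝ) ≤ -s - r')]
                have : rr ≤ r2 := min_le_right _ _
                linarith
            obtain ⟨u, hu_le, hu_diff⟩ := step
            have hqu : ‖q u k‖ ≤ 3/2*ε*w k := himp u hu_le k
            have htri : ‖q s k‖
                ≤ ‖q u k‖ + ‖q s k - q u k‖ := by
              calc ‖q s k‖ = ‖q u k + (q s k - q u k)‖ := by ring_nf
                _ ≤ _ := norm_add_le _ _
            have : ‖q s k‖ ≤ 3/2*ε*w k + ε/2 * w k := by linarith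
            linarith [this]
      have : rnew ≤ r' := le_csSup hAbdd hnewA
      linarith
    · push_neg at hcase
      have hEq : r' = |t| := le_antisymm hr'le hcase
      intro s hs k
      exact hPr' s (hEq ▸ hs) k
  -- conclusion
  have hfin := core |t| (le_refl _) boot t (le_refl _) j
  rw [Complex.sq_norm, Complex.sq_norm]
  have hpos : (0:ℝ) < ε ^ 2 * (1 + (jbra j : ℝ)) ^ (-(3 * σ)) := by
    have := Real.rpow_pos_of_pos (by linarith [hbase j] : (0:ℝ) < 1 + (jbra j:ℝ)) (-(3*σ))
    positivity
  nlinarith [hfin, Real.rpow_pos_of_pos (by linarith [hbase j] : (0:ℝ) < 1 + (jbra j:ℝ)) (-(3*σ))]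
end
end

section
/- Let d ≥ 1 be an integer, σ > 0 and δ > 0 real, c ∈ ℝ, and let k : ℤ^d → ℤ be a nonzero finitely supported function. Let P be the product probability measure on [0,1]^{ℤ^d} (the infinite product over j ∈ ℤ^d of Lebesgue measure on [0,1]). Then P({ x ∈ [0,1]^{ℤ^d} : |c + ∑_{j} k_j (1+|j|₁)^{−2σ} x_j| < δ }) ≤ 2δ · (1 + k⁻)^{2σ}, where k⁻ = min_{j∈supp k}|j|₁. -/
open scoped BigOperators

noncomputable section

/-- ℤ-valued finitely supported functions on `ℤ^d` (integer vectors `k`). -/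
abbrev ZIdx (d : ℕ) := (Fin d → ℤ) →₀ ℤ

/-- the ℓ¹-weight `|k| = ∑_j |k_j|` of an integer vector. -/
def wtZ {d : ℕ} (k : ZIdx d) : ℕ := k.sum fun _ n => n.natAbs

/-- `m⁺ = max_{j ∈ supp m} |j|₁` for a multi-index `m`. -/
def mplus {d : ℕ} (m : MIdx d) : ℕ := m.support.sup norm1

/-- `k⁻ = min_{j ∈ supp k} |j|₁` for an integer vector `k` (junk value `0` if `k = 0`). -/
def kminus {d : ℕ} (k : ZIdx d) : ℕ := sInf (norm1 '' (k.support : Set (Fin d → ℤ)))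

/-- the integer vector `β − γ` associated with a pair of multi-indices. -/
def subZ {d : ℕ} (β γ : MIdx d) : ZIdx d :=
  β.mapRange (fun n : ℕ => (n : ℤ)) (by simp) - γ.mapRange (fun n : ℕ => (n : ℤ)) (by simp)

open MeasureTheory

set_option maxHeartbeats 1000000

private lemma floor_box' (N : ℕ) (hN : 1 ≤ N) {y : ℝ} (hy : y ∈ Set.Icc (0:ℝ) 1) :
    ((min ⌊(N:ℝ)*y⌋₊ (N-1) : ℕ) : ℝ)/N ≤ y ∧ y ≤ (((min ⌊(N:ℝ)*y⌋₊ (N-1) : ℕ) : ℝ) + 1)/N := by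
  have hN0 : (0:ℝ) < N := by exact_mod_cast hN
  obtain ⟨hy0, hy1⟩ := hy
  have hNy0 : (0:ℝ) ≤ (N:ℝ) * y := by positivity
  rcases le_or_gt N ⌊(N:ℝ)*y⌋₊ with h | h
  · have h1 : (N:ℝ) ≤ (N:ℝ)*y := by exact_mod_cast (Nat.le_floor_iff hNy0).mp h
    have hy1' : y = 1 := le_antisymm hy1 (by nlinarith)
    have hmin : min ⌊(N:ℝ)*y⌋₊ (N-1) = N - 1 := min_eq_right (by omega)
    rw [hmin, hy1']
    have hcast : ((N - 1 : ℕ) : ℝ) = (N:ℝ) - 1 := by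
      push_cast [Nat.cast_sub hN]; ring
    rw [hcast]
    constructor
    · rw [div_le_iff₀ hN0]; linarith
    · rw [le_div_iff₀ hN0]; linarith
  · have hmin : min ⌊(N:ℝ)*y⌋₊ (N-1) = ⌊(N:ℝ)*y⌋₊ := min_eq_left (by omega)
    rw [hmin]
    constructor
    · rw [div_le_iff₀ hN0]
      have := Nat.floor_le hNy0
      linarith [this]
    · rw [le_div_iff₀ hN0]
      have := Nat.lt_floor_add_one ((N:ℝ)*y)
      push_cast at this ⊢
      linarith

private lemma aux_resonance
    (d : ℕ) (σ δ : ℝ) (hδ : 0 < δ)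
    (c : ℝ) (k : (Fin d → ℤ) →₀ ℤ)
    (n₀ : ℕ)
    (P : Measure ((Fin d → ℤ) → ℝ))
    (hP : ∀ (s : Finset (Fin d → ℤ)) (A : (Fin d → ℤ) → Set ℝ),
      (∀ j, MeasurableSet (A j)) →
        P {x | ∀ j ∈ s, x j ∈ A j} = ∏ j ∈ s, volume (A j ∩ Set.Icc (0 : ℝ) 1))
    (w : (Fin d → ℤ) → ℝ) (hw0 : ∀ j, 0 < w j)
    (hB0 : (0:ℝ) < (1 + (n₀:ℝ)) ^ (2*σ))
    (hn₀ : ∃ j₀ ∈ k.support, w j₀ = ((1 + (n₀:ℝ)) ^ (2*σ))⁻¹) :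
    P {x | |c + k.sum fun j kj => (kj : ℝ) * w j * x j| < δ}
      ≤ ENNReal.ofReal (2 * δ * (1 + (n₀ : ℝ)) ^ (2 * σ)) := by
  classical
  set s : Finset (Fin d → ℤ) := k.support with hs
  obtain ⟨j₀, hj₀s, hwj₀⟩ := hn₀
  set a : (Fin d → ℤ) → ℝ := fun j => (k j : ℝ) * w j with ha
  have hk0 : k j₀ ≠ 0 := Finsupp.mem_support_iff.mp hj₀s
  set A0 : ℝ := |a j₀| with hA0def
  have hA0 : 0 < A0 := abs_pos.mpr (mul_ne_zero (Int.cast_ne_zero.mpr hk0) (hw0 j₀).ne')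
  set B : ℝ := (1 + (n₀ : ℝ)) ^ (2*σ) with hB
  have hinvA : A0⁻¹ ≤ B := by
    have h1 : B⁻¹ ≤ A0 := by
      have hone : (1:ℝ) ≤ |(k j₀:ℝ)| := by exact_mod_cast Int.one_le_abs hk0
      calc B⁻¹ = 1 * B⁻¹ := (one_mul _).symm
        _ ≤ |(k j₀ : ℝ)| * B⁻¹ := by gcongr
        _ = A0 := by rw [hA0def, ha]; simp only [abs_mul]; rw [abs_of_pos (hw0 j₀), hwj₀]
    calc A0⁻¹ ≤ (B⁻¹)⁻¹ := by
          exact inv_anti₀ (inv_pos.mpr hB0) h1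
      _ = B := inv_inv B
  set C : ℝ := ∑ j ∈ s.erase j₀, |a j| with hC
  have hC0 : 0 ≤ C := Finset.sum_nonneg fun j _ => abs_nonneg _
  have hset : {x : (Fin d → ℤ) → ℝ | |c + k.sum fun j kj => (kj : ℝ) * w j * x j| < δ}
      = {x : (Fin d → ℤ) → ℝ | |c + ∑ j ∈ s, a j * x j| < δ} := by
    ext x; simp [Finsupp.sum, ha, hs]
  rw [hset]
  set bad := {x : (Fin d → ℤ) → ℝ | |c + ∑ j ∈ s, a j * x j| < δ} with hbad
  -- probability facts
  have hG : MeasurableSet {x : (Fin d → ℤ) → ℝ | ∀ j ∈ s, x j ∈ Set.Icc (0:ℝ) 1} := by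
    have heq : {x : (Fin d → ℤ) → ℝ | ∀ j ∈ s, x j ∈ Set.Icc (0:ℝ) 1}
        = ⋂ j ∈ (s : Set (Fin d → ℤ)), (fun x : (Fin d → ℤ) → ℝ => x j) ⁻¹' Set.Icc (0:ℝ) 1 := by
      ext x; simp
    rw [heq]
    exact MeasurableSet.biInter s.countable_toSet fun j _ =>
      (measurable_pi_apply j) measurableSet_Icc
  have hPuniv : P Set.univ = 1 := by
    have h := hP ∅ (fun _ => Set.univ) (fun _ => MeasurableSet.univ)
    simpa using h
  have hPG : P {x : (Fin d → ℤ) → ℝ | ∀ j ∈ s, x j ∈ Set.Icc (0:ℝ) 1} = 1 := by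
    have h := hP s (fun _ => Set.Icc (0:ℝ) 1) (fun _ => measurableSet_Icc)
    simpa [Real.volume_Icc] using h
  have hPZ : P {x : (Fin d → ℤ) → ℝ | ∀ j ∈ s, x j ∈ Set.Icc (0:ℝ) 1}ᶜ = 0 := by
    rw [measure_compl hG (by rw [hPG]; exact ENNReal.one_ne_top), hPuniv, hPG, tsub_self]
  -- the per-N bound
  have key : ∀ N : ℕ, 1 ≤ N →
      P bad ≤ ENNReal.ofReal (2 * ((δ + C/N) * A0⁻¹)) := by
    intro N hN
    have hN0 : (0:ℝ) < N := by exact_mod_cast hN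
    set tf : (↥(s.erase j₀) → Fin N) → ℝ :=
      fun f => ∑ j : ↥(s.erase j₀), a j.1 * (((f j : ℕ) : ℝ) / N) with htf
    set m : (↥(s.erase j₀) → Fin N) → ℝ := fun f => (-c - tf f) / a j₀ with hm
    set r : ℝ := (δ + C/N) / A0 with hr
    set A : (↥(s.erase j₀) → Fin N) → (Fin d → ℤ) → Set ℝ := fun f j =>
      if h : j ∈ s.erase j₀ then
        Set.Icc (((f ⟨j, h⟩ : ℕ) : ℝ)/N) ((((f ⟨j, h⟩ : ℕ) : ℝ) + 1)/N)
      else if j = j₀ then Set.Icc (m f - r) (m f + r) else Set.univ with hA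
    have hAmeas : ∀ f j, MeasurableSet (A f j) := by
      intro f j
      simp only [hA]
      split
      · exact measurableSet_Icc
      · split
        · exact measurableSet_Icc
        · exact MeasurableSet.univ
    -- cover
    have hcover : bad ⊆ {x : (Fin d → ℤ) → ℝ | ∀ j ∈ s, x j ∈ Set.Icc (0:ℝ) 1}ᶜ ∪
        ⋃ f : ↥(s.erase j₀) → Fin N, {x | ∀ j ∈ s, x j ∈ A f j} := by
      intro x hx
      by_cases hxc : ∀ j ∈ s, x j ∈ Set.Icc (0:ℝ) 1
      swap
      · exact Or.inl hxc
      right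
      have hx' : |c + ∑ j ∈ s, a j * x j| < δ := hx
      set nn : (Fin d → ℤ) → ℕ := fun j => min ⌊(N:ℝ) * x j⌋₊ (N-1) with hnn
      have hnnlt : ∀ j, nn j < N := fun j => lt_of_le_of_lt (min_le_right _ _) (by omega)
      set f : ↥(s.erase j₀) → Fin N := fun j => ⟨nn j.1, hnnlt j.1⟩ with hf
      refine Set.mem_iUnion.mpr ⟨f, ?_⟩
      have hbox : ∀ j ∈ s.erase j₀, ((nn j : ℝ)/N ≤ x j ∧ x j ≤ ((nn j : ℝ) + 1)/N) :=
        fun j hj => floor_box' N hN (hxc j (Finset.mem_of_mem_erase hj))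
      have hfb : ∀ j ∈ s.erase j₀, |x j - (nn j : ℝ)/N| ≤ 1/N := by
        intro j hj
        obtain ⟨h1, h2⟩ := hbox j hj
        have hadd : ((nn j : ℝ) + 1)/N = (nn j : ℝ)/N + 1/N := add_div _ _ _
        rw [abs_sub_le_iff]
        constructor <;> [linarith; linarith [(by positivity : (0:ℝ) ≤ 1/N)]]
      have htfeq : tf f = ∑ j ∈ s.erase j₀, a j * ((nn j : ℝ)/N) := by
        rw [htf]
        exact Finset.sum_coe_sort (s.erase j₀) (fun j => a j * ((nn j : ℝ)/N))
      have htdiff : |(∑ j ∈ s.erase j₀, a j * x j) - tf f| ≤ C / N := by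
        rw [htfeq, ← Finset.sum_sub_distrib]
        refine (Finset.abs_sum_le_sum_abs _ _).trans ?_
        calc ∑ j ∈ s.erase j₀, |a j * x j - a j * ((nn j : ℝ)/N)|
            ≤ ∑ j ∈ s.erase j₀, |a j| * (1/N) := by
              refine Finset.sum_le_sum fun j hj => ?_
              rw [← mul_sub, abs_mul]
              exact mul_le_mul_of_nonneg_left (hfb j hj) (abs_nonneg _)
          _ = C / N := by rw [← Finset.sum_mul, hC]; ring
      intro j hjs
      by_cases hje : j ∈ s.erase j₀
      · simp only [hA]
        rw [dif_pos hje]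
        exact Set.mem_Icc.mpr (hbox j hje)
      · have hjj : j = j₀ := by
          by_contra hne
          exact hje (Finset.mem_erase.mpr ⟨hne, hjs⟩)
        subst hjj
        have hAj : A f j = Set.Icc (m f - r) (m f + r) := by
          simp [hA, Finset.notMem_erase]
        rw [hAj]
        -- arithmetic
        have hsplit : ∑ j' ∈ s, a j' * x j' = a j * x j + ∑ j' ∈ s.erase j, a j' * x j' :=
          (Finset.add_sum_erase s _ hjs).symm
        have hmval : a j * m f = -c - tf f := by
          rw [hm]
          field_simp
          exact mul_div_cancel_left₀ _ (abs_pos.mp hA0)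
        have h2 : |a j * x j - a j * m f| < δ + C/N := by
          have heq : a j * x j - a j * m f
              = (c + (a j * x j + ∑ j' ∈ s.erase j, a j' * x j'))
                + (tf f - ∑ j' ∈ s.erase j, a j' * x j') := by
            rw [hmval]; ring
          rw [heq]
          calc _ ≤ |c + (a j * x j + ∑ j' ∈ s.erase j, a j' * x j')|
                + |tf f - ∑ j' ∈ s.erase j, a j' * x j'| := abs_add_le _ _
            _ < δ + C/N := by
                have h3 : |c + (a j * x j + ∑ j' ∈ s.erase j, a j' * x j')| < δ := by
                  rw [← hsplit]; exact hx'
                have h4 : |tf f - ∑ j' ∈ s.erase j, a j' * x j'| ≤ C/N := by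
                  rw [abs_sub_comm]; exact htdiff
                linarith
        have h3 : A0 * |x j - m f| < δ + C/N := by
          calc A0 * |x j - m f| = |a j * x j - a j * m f| := by
                rw [hA0def, ← abs_mul, mul_sub]
            _ < _ := h2
        have h4 : |x j - m f| ≤ r := by
          rw [hr, le_div_iff₀ hA0]
          nlinarith
        obtain ⟨h5, h6⟩ := abs_le.mp h4
        exact Set.mem_Icc.mpr ⟨by linarith, by linarith⟩
    -- measure of each cylinder
    have hEbound : ∀ f : ↥(s.erase j₀) → Fin N,
        P {x | ∀ j ∈ s, x j ∈ A f j}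
          ≤ ENNReal.ofReal (2*r) * ENNReal.ofReal (1/N) ^ (s.erase j₀).card := by
      intro f
      rw [hP s (A f) (hAmeas f), ← Finset.mul_prod_erase s _ hj₀s]
      have h1 : volume (A f j₀ ∩ Set.Icc 0 1) ≤ ENNReal.ofReal (2*r) := by
        have hj : A f j₀ = Set.Icc (m f - r) (m f + r) := by
          simp [hA, Finset.notMem_erase]
        rw [hj]
        refine (measure_mono Set.inter_subset_left).trans ?_
        rw [Real.volume_Icc]
        exact ENNReal.ofReal_le_ofReal (by ring_nf; exact le_refl _)
      have h2 : ∀ j ∈ s.erase j₀, volume (A f j ∩ Set.Icc 0 1) ≤ ENNReal.ofReal (1/N) := by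
        intro j hj
        have hj' : A f j = Set.Icc (((f ⟨j, hj⟩ : ℕ) : ℝ)/N) ((((f ⟨j, hj⟩ : ℕ) : ℝ) + 1)/N) := by
          simp only [hA]
          rw [dif_pos hj]
        rw [hj']
        refine (measure_mono Set.inter_subset_left).trans ?_
        rw [Real.volume_Icc]
        refine ENNReal.ofReal_le_ofReal ?_
        rw [div_sub_div_same]
        ring_nf
        exact le_refl _
      calc volume (A f j₀ ∩ Set.Icc 0 1) * ∏ j ∈ s.erase j₀, volume (A f j ∩ Set.Icc 0 1)
          ≤ ENNReal.ofReal (2*r) * ∏ j ∈ s.erase j₀, ENNReal.ofReal (1/N) :=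
            mul_le_mul' h1 (Finset.prod_le_prod' h2)
        _ = _ := by rw [Finset.prod_const]
    -- sum up
    have hsum : P bad ≤ ∑ f : (↥(s.erase j₀) → Fin N), P {x | ∀ j ∈ s, x j ∈ A f j} := by
      calc P bad ≤ P ({x : (Fin d → ℤ) → ℝ | ∀ j ∈ s, x j ∈ Set.Icc (0:ℝ) 1}ᶜ ∪
            ⋃ f : ↥(s.erase j₀) → Fin N, {x | ∀ j ∈ s, x j ∈ A f j}) := measure_mono hcover
        _ ≤ P {x : (Fin d → ℤ) → ℝ | ∀ j ∈ s, x j ∈ Set.Icc (0:ℝ) 1}ᶜ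
            + P (⋃ f : ↥(s.erase j₀) → Fin N, {x | ∀ j ∈ s, x j ∈ A f j}) := measure_union_le _ _
        _ ≤ 0 + ∑ f : (↥(s.erase j₀) → Fin N), P {x | ∀ j ∈ s, x j ∈ A f j} := by
            rw [hPZ]
            gcongr
            exact (measure_iUnion_le _).trans (by rw [tsum_fintype])
        _ = _ := zero_add _
    have hcard : Fintype.card (↥(s.erase j₀) → Fin N) = N ^ (s.erase j₀).card := by
      rw [Fintype.card_fun, Fintype.card_fin, Fintype.card_coe]
    calc P bad ≤ ∑ f : (↥(s.erase j₀) → Fin N), P {x | ∀ j ∈ s, x j ∈ A f j} := hsum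
      _ ≤ ∑ f : (↥(s.erase j₀) → Fin N),
            ENNReal.ofReal (2*r) * ENNReal.ofReal (1/N) ^ (s.erase j₀).card :=
          Finset.sum_le_sum fun f _ => hEbound f
      _ = (N : ENNReal) ^ (s.erase j₀).card
            * (ENNReal.ofReal (2*r) * ENNReal.ofReal (1/N) ^ (s.erase j₀).card) := by
          rw [Finset.sum_const, Finset.card_univ, hcard, nsmul_eq_mul]
          push_cast
          ring
      _ = ENNReal.ofReal (2*r) := by
          rw [← mul_assoc, mul_comm ((N:ENNReal) ^ _), mul_assoc, ← mul_pow]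
          have : (N : ENNReal) * ENNReal.ofReal (1/N) = 1 := by
            rw [← ENNReal.ofReal_natCast N, ← ENNReal.ofReal_mul (by positivity)]
            rw [mul_one_div_cancel hN0.ne', ENNReal.ofReal_one]
          rw [this, one_pow, mul_one]
      _ = ENNReal.ofReal (2 * ((δ + C/N) * A0⁻¹)) := by
          rw [hr]; ring_nf
  -- final epsilon argument
  refine ENNReal.le_of_forall_pos_le_add fun ε hε _ => ?_
  have hε0 : (0:ℝ) < (ε:ℝ) := by exact_mod_cast hε
  obtain ⟨N', hN'⟩ := exists_nat_gt (2 * C * B / (ε:ℝ))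
  set N : ℕ := max 1 N' with hNdef
  have hN1 : 1 ≤ N := le_max_left _ _
  have hN0 : (0:ℝ) < N := by exact_mod_cast hN1
  have hNge : (2 * C * B / (ε:ℝ)) < N := lt_of_lt_of_le hN' (by exact_mod_cast le_max_right 1 N')
  have hεN : 2*C*B/N ≤ (ε:ℝ) := by
    rw [div_le_iff₀ hN0]
    have h1 : 2*C*B < N * ε := by
      rw [div_lt_iff₀ hε0] at hNge
      linarith
    nlinarith
  have hreal : 2 * ((δ + C/N) * A0⁻¹) ≤ 2*δ*B + 2*C*B/N := by
    have h1 : (0:ℝ) ≤ δ + C/N := by positivity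
    calc 2 * ((δ + C/N) * A0⁻¹) ≤ 2 * ((δ + C/N) * B) := by gcongr
      _ = 2*δ*B + 2*C*B/N := by ring
  calc P bad ≤ ENNReal.ofReal (2 * ((δ + C/N) * A0⁻¹)) := key N hN1
    _ ≤ ENNReal.ofReal (2*δ*B + 2*C*B/N) := ENNReal.ofReal_le_ofReal hreal
    _ ≤ ENNReal.ofReal (2*δ*B) + ENNReal.ofReal (2*C*B/N) := ENNReal.ofReal_add_le
    _ ≤ ENNReal.ofReal (2*δ*B) + (ε : ENNReal) := by
        gcongr
        calc ENNReal.ofReal (2*C*B/N) ≤ ENNReal.ofReal (ε:ℝ) := ENNReal.ofReal_le_ofReal hεN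
          _ = (ε : ENNReal) := ENNReal.ofReal_coe_nnreal



/-- single small-divisor measure bound.
Here `P` is the product probability measure on `[0,1]^{ℤ^d}`, characterized by its values on
measurable cylinder sets. For any nonzero finitely supported `k : ℤ^d → ℤ` and any `c ∈ ℝ`,
`P({x : |c + ∑_j k_j (1+|j|₁)^{-2σ} x_j| < δ}) ≤ 2δ (1 + k⁻)^{2σ}`. -/
theorem measure_single_resonance_bound
    (d : ℕ) (hd : 1 ≤ d) (σ δ : ℝ) (hσ : 0 < σ) (hδ : 0 < δ)
    (c : ℝ) (k : ZIdx d) (hk : k ≠ 0)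
    (P : Measure ((Fin d → ℤ) → ℝ))
    (hP : ∀ (s : Finset (Fin d → ℤ)) (A : (Fin d → ℤ) → Set ℝ),
      (∀ j, MeasurableSet (A j)) →
        P {x | ∀ j ∈ s, x j ∈ A j} = ∏ j ∈ s, volume (A j ∩ Set.Icc (0 : ℝ) 1)) :
    P {x | |c + k.sum fun j kj => (kj : ℝ) * (1 + (norm1 j : ℝ)) ^ (-(2 * σ)) * x j| < δ}
      ≤ ENNReal.ofReal (2 * δ * (1 + (kminus k : ℝ)) ^ (2 * σ)) := by
  have hsne : k.support.Nonempty := Finsupp.support_nonempty_iff.mpr hk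
  have himg : (norm1 '' (k.support : Set (Fin d → ℤ))).Nonempty := hsne.to_set.image _
  have hmem : kminus k ∈ norm1 '' (k.support : Set (Fin d → ℤ)) := Nat.sInf_mem himg
  obtain ⟨j₀, hj₀, hj₀n⟩ := hmem
  exact aux_resonance d σ δ hδ c k (kminus k) P hP
    (fun j => (1 + (norm1 j : ℝ)) ^ (-(2 * σ)))
    (fun j => Real.rpow_pos_of_pos (by positivity) _)
    (Real.rpow_pos_of_pos (by positivity) _)
    ⟨j₀, Finset.mem_coe.mp hj₀, by rw [← hj₀n]; exact Real.rpow_neg (by positivity) _⟩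
end
end

section
/- For every integer d ≥ 1, every real σ ≥ d+1, and every integer M ≥ 6, one has the numerical estimate ∑_{s∈ℤ^d} (1+|s|₁)^{−σ} · ∑_{i=0}^{M} ∑_{j=6}^{M} (2i+2)^{dj} (2+10i)^{−2dj} < 1. (This is the convergent series appearing in the measure estimate for the set of resonant frequencies, summed over the anchor point s, the diameter i = Δ(k), and the weight j = |k| of the integer vectors k.) -/
open scoped BigOperators

noncomputable section

open scoped ENNReal NNReal

section AuxLemmas

open Finset

private lemma tele (a : ℕ) : ∀ N : ℕ, ∑ m ∈ range (N+1), (1/((a:ℝ)+1+m)^2)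
    ≤ 1/((a:ℝ)+1)^2 + 1/((a:ℝ)+1) - 1/((a:ℝ)+1+N) := by
  intro N
  induction N with
  | zero => simp
  | succ N ih =>
    rw [Finset.sum_range_succ]
    have h1 : (0:ℝ) < (a:ℝ)+1+N := by positivity
    have h2 : (0:ℝ) < (a:ℝ)+1+(N+1) := by positivity
    have key : (1:ℝ)/((a:ℝ)+1+(N+1))^2 ≤ 1/((a:ℝ)+1+N) - 1/((a:ℝ)+1+(N+1)) := by
      rw [div_sub_div _ _ (ne_of_gt h1) (ne_of_gt h2),
        div_le_div_iff₀ (by positivity) (by positivity)]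
      nlinarith [sq_nonneg ((a:ℝ)+1+N)]
    push_cast at *
    linarith

private lemma invsq_sum_le (a N : ℕ) :
    ∑ m ∈ range N, (1/((a:ℝ)+1+m)^2) ≤ 2/((a:ℝ)+1) := by
  have h0 : (0:ℝ) < (a:ℝ)+1 := by positivity
  rcases N with _ | N
  · simp; positivity
  · have H := tele a N
    have h1 : (0:ℝ) < (a:ℝ)+1+N := by positivity
    have hs : 1/((a:ℝ)+1)^2 ≤ 1/((a:ℝ)+1) := by
      rw [div_le_div_iff₀ (by positivity) h0]; nlinarith
    have ht : (0:ℝ) < 1/((a:ℝ)+1+N) := by positivity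
    have : 2/((a:ℝ)+1) = 1/((a:ℝ)+1) + 1/((a:ℝ)+1) := by ring
    linarith

private lemma invsq_sum_le' (N : ℕ) : ∑ m ∈ range N, (1/((m:ℝ)+1)^2) ≤ 2 := by
  have h := invsq_sum_le 0 N
  norm_num at h
  calc ∑ m ∈ range N, 1/((m:ℝ)+1)^2
      = ∑ m ∈ range N, ((1+(m:ℝ))^2)⁻¹ := sum_congr rfl fun m _ => by
        rw [one_div]; ring_nf
    _ ≤ 2 := h

private lemma perterm (d i j : ℕ) (hd : 1 ≤ d) (hj : 6 ≤ j) :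
    (2*(i:ℝ)+2)^(d*j) / (2+10*(i:ℝ))^(2*d*j)
      ≤ 1/((i:ℝ)+1)^2 * (1/2^(6*d)) * (1/2)^(j-6) := by
  have hi : (0:ℝ) ≤ (i:ℝ) := Nat.cast_nonneg i
  have hx : (0:ℝ) < 2+10*(i:ℝ) := by positivity
  have hdj2 : 2 ≤ d*j := le_trans (by omega) (Nat.mul_le_mul hd hj)
  have hexp : 6*d + (j-6) ≤ d*j := by
    have h1 : j - 6 ≤ d * (j-6) := Nat.le_mul_of_pos_left _ (by omega)
    have h2 : d*j = d*6 + d*(j-6) := by rw [← Nat.mul_add]; congr 1; omega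
    omega
  have step1 : (2*(i:ℝ)+2)^(d*j) / (2+10*(i:ℝ))^(2*d*j)
      ≤ (2+10*(i:ℝ))^(d*j) / (2+10*(i:ℝ))^(2*d*j) := by
    apply div_le_div_of_nonneg_right ?_ (by positivity)
    exact pow_le_pow_left₀ (by linarith) (by linarith) _
  have step2 : (2+10*(i:ℝ))^(d*j) / (2+10*(i:ℝ))^(2*d*j) = 1/(2+10*(i:ℝ))^(d*j) := by
    have h : 2*d*j = d*j + d*j := by ring
    rw [h, pow_add, div_mul_eq_div_div, div_self (by positivity)]
  have step3 : ((i:ℝ)+1)^2 * (2^(6*d) * 2^(j-6)) ≤ (2+10*(i:ℝ))^(d*j) := by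
    calc ((i:ℝ)+1)^2 * (2^(6*d) * 2^(j-6))
        ≤ ((i:ℝ)+1)^(d*j) * 2^(d*j) := by
          have e1 : ((i:ℝ)+1)^2 ≤ ((i:ℝ)+1)^(d*j) :=
            pow_le_pow_right₀ (by linarith) hdj2
          have e2 : (2:ℝ)^(6*d) * 2^(j-6) ≤ 2^(d*j) := by
            rw [← pow_add]; exact pow_le_pow_right₀ one_le_two hexp
          exact mul_le_mul e1 e2 (by positivity) (by positivity)
      _ = (2*((i:ℝ)+1))^(d*j) := by rw [mul_pow]; ring
      _ ≤ (2+10*(i:ℝ))^(d*j) :=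
          pow_le_pow_left₀ (by linarith) (by linarith) _
  calc (2*(i:ℝ)+2)^(d*j) / (2+10*(i:ℝ))^(2*d*j)
      ≤ 1/(2+10*(i:ℝ))^(d*j) := step2 ▸ step1
    _ ≤ 1/(((i:ℝ)+1)^2 * (2^(6*d) * 2^(j-6))) :=
        one_div_le_one_div_of_le (by positivity) step3
    _ = 1/((i:ℝ)+1)^2 * (1/2^(6*d)) * (1/2)^(j-6) := by
        rw [div_pow, one_pow]; field_simp

private lemma Bbound (d M : ℕ) (hd : 1 ≤ d) :
    ∑ i ∈ range (M+1), ∑ j ∈ Icc 6 M,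
      (2*(i:ℝ)+2)^(d*j) / (2+10*(i:ℝ))^(2*d*j) ≤ 4 / 2^(6*d) := by
  have inner : ∀ i : ℕ, ∑ j ∈ Icc 6 M, (2*(i:ℝ)+2)^(d*j) / (2+10*(i:ℝ))^(2*d*j)
      ≤ 1/((i:ℝ)+1)^2 * (2/2^(6*d)) := by
    intro i
    have geo : ∑ j ∈ Icc 6 M, ((1:ℝ)/2)^(j-6) ≤ 2 := by
      rw [← Finset.Ico_add_one_right_eq_Icc, Finset.sum_Ico_eq_sum_range]
      calc ∑ k ∈ range (M+1-6), ((1:ℝ)/2)^(6+k-6)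
          = ∑ k ∈ range (M+1-6), ((1:ℝ)/2)^k := by
            apply sum_congr rfl; intro k _; congr 1; omega
        _ ≤ 2 := sum_geometric_two_le _
    calc ∑ j ∈ Icc 6 M, (2*(i:ℝ)+2)^(d*j) / (2+10*(i:ℝ))^(2*d*j)
        ≤ ∑ j ∈ Icc 6 M, 1/((i:ℝ)+1)^2 * (1/2^(6*d)) * (1/2)^(j-6) :=
          sum_le_sum fun j hj => perterm d i j hd (mem_Icc.mp hj).1
      _ = 1/((i:ℝ)+1)^2 * (1/2^(6*d)) * ∑ j ∈ Icc 6 M, ((1:ℝ)/2)^(j-6) := by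
          rw [mul_sum]
      _ ≤ 1/((i:ℝ)+1)^2 * (1/2^(6*d)) * 2 :=
          mul_le_mul_of_nonneg_left geo (by positivity)
      _ = 1/((i:ℝ)+1)^2 * (2/2^(6*d)) := by ring
  calc ∑ i ∈ range (M+1), ∑ j ∈ Icc 6 M, (2*(i:ℝ)+2)^(d*j) / (2+10*(i:ℝ))^(2*d*j)
      ≤ ∑ i ∈ range (M+1), 1/((i:ℝ)+1)^2 * (2/2^(6*d)) :=
        sum_le_sum fun i _ => inner i
    _ = (∑ i ∈ range (M+1), 1/((i:ℝ)+1)^2) * (2/2^(6*d)) := by rw [sum_mul]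
    _ ≤ 2 * (2/2^(6*d)) :=
        mul_le_mul_of_nonneg_right (invsq_sum_le' (M+1)) (by positivity)
    _ = 4 / 2^(6*d) := by ring

private lemma ofReal_nat_inv_pow (x k : ℕ) (hx : 0 < x) :
    ENNReal.ofReal (1/(x:ℝ)^k) = ((x:ℝ≥0∞)⁻¹)^k := by
  have hx' : (0:ℝ) < (x:ℝ) := by exact_mod_cast hx
  rw [one_div, ENNReal.ofReal_inv_of_pos (by positivity),
    ENNReal.ofReal_pow (by positivity), ENNReal.ofReal_natCast]
  exact ENNReal.inv_pow

private lemma L1E (a : ℕ) :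
    ∑' m : ℕ, (((a+1+m : ℕ):ℝ≥0∞)⁻¹)^2 ≤ 2 * ((a+1:ℕ):ℝ≥0∞)⁻¹ := by
  apply ENNReal.tsum_le_of_sum_range_le
  intro n
  have key : ∀ m : ℕ, (((a+1+m : ℕ):ℝ≥0∞)⁻¹)^2 = ENNReal.ofReal (1/((a:ℝ)+1+m)^2) := by
    intro m
    rw [← ofReal_nat_inv_pow (a+1+m) 2 (by omega)]
    congr 1
    push_cast
    ring
  calc ∑ m ∈ range n, (((a+1+m : ℕ):ℝ≥0∞)⁻¹)^2
      = ENNReal.ofReal (∑ m ∈ range n, 1/((a:ℝ)+1+m)^2) := by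
        rw [ENNReal.ofReal_sum_of_nonneg (fun m _ => by positivity)]
        exact Finset.sum_congr rfl fun m _ => key m
    _ ≤ ENNReal.ofReal (2/((a:ℝ)+1)) := ENNReal.ofReal_le_ofReal (invsq_sum_le a n)
    _ = 2 * ((a+1:ℕ):ℝ≥0∞)⁻¹ := by
        rw [div_eq_mul_inv, ENNReal.ofReal_mul (by norm_num),
          show ((a:ℝ)+1) = ((a+1:ℕ):ℝ) by push_cast; ring,
          ENNReal.ofReal_inv_of_pos (by positivity), ENNReal.ofReal_natCast,
          ENNReal.ofReal_ofNat]

private lemma L2E (a c : ℕ) : ∑' m : ℕ, (((a+1+m : ℕ):ℝ≥0∞)⁻¹)^(c+2)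
    ≤ 2 * (((a+1:ℕ):ℝ≥0∞)⁻¹)^(c+1) := by
  have hterm : ∀ m : ℕ, (((a+1+m : ℕ):ℝ≥0∞)⁻¹)^(c+2)
      ≤ (((a+1:ℕ):ℝ≥0∞)⁻¹)^c * (((a+1+m : ℕ):ℝ≥0∞)⁻¹)^2 := by
    intro m
    rw [pow_add]
    have hle : (((a+1+m : ℕ):ℝ≥0∞)⁻¹) ≤ ((a+1:ℕ):ℝ≥0∞)⁻¹ :=
      ENNReal.inv_le_inv' (Nat.cast_le.mpr (Nat.le_add_right (a+1) m))
    exact mul_le_mul' (pow_le_pow_left' hle c) (pow_le_pow_left' le_rfl 2)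
  calc ∑' m : ℕ, (((a+1+m : ℕ):ℝ≥0∞)⁻¹)^(c+2)
      ≤ ∑' m : ℕ, (((a+1:ℕ):ℝ≥0∞)⁻¹)^c * (((a+1+m : ℕ):ℝ≥0∞)⁻¹)^2 :=
        ENNReal.tsum_le_tsum hterm
    _ = (((a+1:ℕ):ℝ≥0∞)⁻¹)^c * ∑' m : ℕ, (((a+1+m : ℕ):ℝ≥0∞)⁻¹)^2 :=
        ENNReal.tsum_mul_left
    _ ≤ (((a+1:ℕ):ℝ≥0∞)⁻¹)^c * (2 * ((a+1:ℕ):ℝ≥0∞)⁻¹) := by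
        gcongr
        exact L1E a
    _ = 2 * (((a+1:ℕ):ℝ≥0∞)⁻¹)^(c+1) := by ring

private lemma auxE : ∀ (d c a : ℕ), ∑' t : Fin d → ℕ,
    (((a+1+∑ i, t i : ℕ):ℝ≥0∞)⁻¹)^(d+c+1) ≤ 2^d * (((a+1:ℕ):ℝ≥0∞)⁻¹)^(c+1) := by
  intro d
  induction d with
  | zero =>
    intro c a
    rw [tsum_eq_single default (fun b hb => absurd (Subsingleton.elim b default) hb)]
    simp
  | succ d ih =>
    intro c a
    rw [← Equiv.tsum_eq (Fin.consEquiv (fun _ : Fin (d+1) => ℕ)), ENNReal.tsum_prod']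
    have hsum : ∀ (m : ℕ) (t : Fin d → ℕ),
        a+1+∑ i, ((Fin.consEquiv (fun _ : Fin (d+1) => ℕ)) (m,t)) i
          = (a+m)+1+∑ i, t i := by
      intro m t
      simp [Fin.consEquiv, Fin.sum_cons]
      omega
    calc ∑' (m : ℕ) (t : Fin d → ℕ),
          (((a+1+∑ i, ((Fin.consEquiv (fun _ : Fin (d+1) => ℕ)) (m,t)) i : ℕ):ℝ≥0∞)⁻¹)^(d+1+c+1)
        = ∑' (m : ℕ) (t : Fin d → ℕ),
            ((((a+m)+1+∑ i, t i : ℕ):ℝ≥0∞)⁻¹)^(d+(c+1)+1) := by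
          refine tsum_congr fun m => tsum_congr fun t => ?_
          rw [hsum m t]
          congr 2
          omega
      _ ≤ ∑' m : ℕ, 2^d * ((((a+m)+1:ℕ):ℝ≥0∞)⁻¹)^(c+2) :=
          ENNReal.tsum_le_tsum fun m => ih (c+1) (a+m)
      _ = 2^d * ∑' m : ℕ, (((a+1+m:ℕ):ℝ≥0∞)⁻¹)^(c+2) := by
          rw [ENNReal.tsum_mul_left]
          refine congrArg _ (tsum_congr fun m => ?_)
          congr 3
          omega
      _ ≤ 2^d * (2 * (((a+1:ℕ):ℝ≥0∞)⁻¹)^(c+1)) := by gcongr; exact L2E a c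
      _ = 2^(d+1) * (((a+1:ℕ):ℝ≥0∞)⁻¹)^(c+1) := by ring

private lemma phi_inj (d : ℕ) : Function.Injective (fun s : Fin d → ℤ =>
    ((fun i => decide (s i < 0), fun i => (s i).natAbs) :
      (Fin d → Bool) × (Fin d → ℕ))) := by
  intro s s' h
  funext i
  have h1 := congrFun (congrArg Prod.fst h) i
  have h2 := congrFun (congrArg Prod.snd h) i
  simp only at h1 h2
  have h1' : (s i < 0) ↔ (s' i < 0) := by simpa [decide_eq_decide] using h1
  omega

private lemma hpoint (d : ℕ) (σ : ℝ) (hσ : (d:ℝ) + 1 ≤ σ) (n : ℕ) :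
    ENNReal.ofReal ((1+(n:ℝ))^(-σ)) ≤ (((n+1:ℕ):ℝ≥0∞)⁻¹)^(d+1) := by
  have hn : (0:ℝ) ≤ (n:ℝ) := Nat.cast_nonneg n
  have hx : (1:ℝ) ≤ 1+(n:ℝ) := by linarith
  have e1 : (1+(n:ℝ))^(-σ) ≤ (1+(n:ℝ))^(-((d:ℝ)+1)) :=
    Real.rpow_le_rpow_of_exponent_le hx (by linarith)
  have e2 : (1+(n:ℝ))^(-((d:ℝ)+1)) = 1/((n+1:ℕ):ℝ)^(d+1) := by
    rw [show (1+(n:ℝ)) = ((n+1:ℕ):ℝ) by push_cast; ring,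
      Real.rpow_neg (by positivity),
      show ((d:ℝ)+1) = ((d+1:ℕ):ℝ) by push_cast; ring,
      Real.rpow_natCast, one_div]
  calc ENNReal.ofReal ((1+(n:ℝ))^(-σ))
      ≤ ENNReal.ofReal ((1+(n:ℝ))^(-((d:ℝ)+1))) := ENNReal.ofReal_le_ofReal e1
    _ = (((n+1:ℕ):ℝ≥0∞)⁻¹)^(d+1) := by rw [e2, ofReal_nat_inv_pow (n+1) (d+1) (by omega)]

private lemma Sbound (d : ℕ) (σ : ℝ) (hσ : (d:ℝ) + 1 ≤ σ) :
    ∑' s : Fin d → ℤ, ENNReal.ofReal ((1+(norm1 s : ℝ))^(-σ)) ≤ 2^d * 2^d := by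
  have hC : ∑' t : Fin d → ℕ, (((∑ i, t i + 1:ℕ):ℝ≥0∞)⁻¹)^(d+1) ≤ 2^d := by
    calc ∑' t : Fin d → ℕ, (((∑ i, t i + 1:ℕ):ℝ≥0∞)⁻¹)^(d+1)
        = ∑' t : Fin d → ℕ, (((0+1+∑ i, t i:ℕ):ℝ≥0∞)⁻¹)^(d+0+1) := by
          refine tsum_congr fun t => ?_
          congr 3
          omega
      _ ≤ 2^d * (((0+1:ℕ):ℝ≥0∞)⁻¹)^(0+1) := auxE d 0 0
      _ = 2^d := by norm_num
  calc ∑' s : Fin d → ℤ, ENNReal.ofReal ((1+(norm1 s:ℝ))^(-σ))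
      ≤ ∑' s : Fin d → ℤ, (((norm1 s + 1:ℕ):ℝ≥0∞)⁻¹)^(d+1) :=
        ENNReal.tsum_le_tsum fun s => hpoint d σ hσ (norm1 s)
    _ ≤ ∑' p : (Fin d → Bool) × (Fin d → ℕ), (((∑ i, p.2 i + 1:ℕ):ℝ≥0∞)⁻¹)^(d+1) :=
        ENNReal.tsum_comp_le_tsum_of_injective (phi_inj d)
          (fun p => (((∑ i, p.2 i + 1:ℕ):ℝ≥0∞)⁻¹)^(d+1))
    _ = ∑' (_ : Fin d → Bool), ∑' t : Fin d → ℕ, (((∑ i, t i + 1:ℕ):ℝ≥0∞)⁻¹)^(d+1) :=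
        ENNReal.tsum_prod'
    _ = (Fintype.card (Fin d → Bool) : ℝ≥0∞) *
          ∑' t : Fin d → ℕ, (((∑ i, t i + 1:ℕ):ℝ≥0∞)⁻¹)^(d+1) := by
        rw [tsum_fintype, Finset.sum_const, Finset.card_univ, nsmul_eq_mul]
    _ ≤ (2^d : ℝ≥0∞) * (2^d : ℝ≥0∞) := by
        rw [show (Fintype.card (Fin d → Bool) : ℝ≥0∞) = 2^d by
          simp [Fintype.card_fun]]
        exact mul_le_mul' le_rfl hC

end AuxLemmas

/-- the convergent series in the measure estimate of Lemma 4.1: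
for `d ≥ 1`, `σ ≥ d+1` and `M ≥ 6`,
`∑_{s∈ℤ^d} (1+|s|₁)^{-σ} ∑_{i=0}^{M} ∑_{j=6}^{M} (2i+2)^{dj} (2+10i)^{-2dj} < 1`. -/
theorem resonant_series_lt_one
    (d : ℕ) (hd : 1 ≤ d) (σ : ℝ) (hσ : (d : ℝ) + 1 ≤ σ) (M : ℕ) (hM : 6 ≤ M) :
    ∑' s : Fin d → ℤ,
        ENNReal.ofReal ((1 + (norm1 s : ℝ)) ^ (-σ) *
          ∑ i ∈ Finset.range (M + 1), ∑ j ∈ Finset.Icc 6 M,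
            (2 * (i : ℝ) + 2) ^ (d * j) / (2 + 10 * (i : ℝ)) ^ (2 * d * j))
      < 1 := by
  set B : ℝ := ∑ i ∈ Finset.range (M+1), ∑ j ∈ Finset.Icc 6 M,
      (2*(i:ℝ)+2)^(d*j) / (2+10*(i:ℝ))^(2*d*j) with hBdef
  have hB : B ≤ 4/2^(6*d) := Bbound d M hd
  have hB0 : 0 ≤ B := by
    rw [hBdef]
    exact Finset.sum_nonneg fun i _ => Finset.sum_nonneg fun j _ => by positivity
  have h2 : ((2:ℝ≥0∞)^d * 2^d) = ENNReal.ofReal ((2:ℝ)^d * 2^d) := by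
    rw [ENNReal.ofReal_mul (by positivity), ENNReal.ofReal_pow (by norm_num),
      ENNReal.ofReal_ofNat]
  calc ∑' s : Fin d → ℤ, ENNReal.ofReal ((1 + (norm1 s : ℝ)) ^ (-σ) * B)
      = (∑' s : Fin d → ℤ, ENNReal.ofReal ((1+(norm1 s:ℝ))^(-σ))) * ENNReal.ofReal B := by
        rw [← ENNReal.tsum_mul_right]
        exact tsum_congr fun s => ENNReal.ofReal_mul (by positivity)
    _ ≤ ((2:ℝ≥0∞)^d * 2^d) * ENNReal.ofReal (4/2^(6*d)) :=
        mul_le_mul' (Sbound d σ hσ) (ENNReal.ofReal_le_ofReal hB)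
    _ = ENNReal.ofReal (((2:ℝ)^d * 2^d) * (4/2^(6*d))) := by
        rw [h2, ← ENNReal.ofReal_mul (by positivity)]
    _ < 1 := by
        rw [ENNReal.ofReal_lt_one]
        have hsplit : (2:ℝ)^(6*d) = 2^d*2^d*2^(4*d) := by
          rw [← pow_add, ← pow_add]; congr 1; omega
        have h4 : (4:ℝ) < 2^(4*d) := by
          calc (4:ℝ) = 2^2 := by norm_num
            _ < 2^(4*d) := by
                apply pow_lt_pow_right₀ one_lt_two (by omega)
        have hpos : (0:ℝ) < 2^(6*d) := by positivity
        rw [show (2:ℝ)^d*2^d*(4/2^(6*d)) = (2^d*2^d*4)/2^(6*d) by ring,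
          div_lt_one hpos, hsplit]
        nlinarith [pow_pos (show (0:ℝ)<2 by norm_num) d]
end
end
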